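/- arXiv:1806.01325 — 8 statements merged into one kernel-verified Lean document; each statement's English description precedes it below -/
import Mathlib

section
/- Let Z be a standard Gaussian random variable and q > 0. For every μ ≤ 0, P(Z + μ > √q | Z + μ ≥ 0) ≤ P(Z > √q | Z ≥ 0). -/
open MeasureTheory ProbabilityTheory Real Set Filter

noncomputable def gg (x : ℝ) : ℝ := Real.exp (-(x ^ 2 / 2))

noncomputable def TT (x : ℝ) : ℝ := ∫ t in Set.Ioi x, gg t

lemma gg_pos (x : ℝ) : 0 < gg x := Real.exp_pos _

lemma gg_cont : Continuous gg := by
  unfold gg; fun_prop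

lemma gg_int : Integrable gg := by
  have h := integrable_exp_neg_mul_sq (by norm_num : (0:ℝ) < 1/2)
  convert h using 2 with x
  unfold gg; ring_nf

lemma gg_hasDeriv (x : ℝ) : HasDerivAt gg (-x * gg x) x := by
  have h : HasDerivAt (fun t : ℝ => -(t ^ 2 / 2)) (-x) x := by
    have := ((hasDerivAt_pow 2 x).div_const 2).neg
    simp at this; exact this
  exact ((Real.hasDerivAt_exp _).comp x h).congr_deriv (by unfold gg; ring)

lemma gg_tendsto : Tendsto gg atTop (nhds 0) := by
  apply Real.tendsto_exp_atBot.comp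
  apply tendsto_neg_atTop_atBot.comp
  exact (tendsto_pow_atTop (two_ne_zero)).atTop_div_const (by norm_num)

lemma TT_pos (x : ℝ) : 0 < TT x := by
  rw [TT, setIntegral_pos_iff_support_of_nonneg_ae
    (ae_of_all _ fun t => (gg_pos t).le) gg_int.integrableOn]
  have hs : Function.support gg = Set.univ := by
    ext t; simp [Function.support, (gg_pos t).ne']
  rw [hs, Set.univ_inter]
  simp [Real.volume_Ioi]

lemma TT_eq (x : ℝ) : TT x = TT 0 - ∫ t in (0:ℝ)..x, gg t := by
  have h1 : TT x + ∫ t in Set.Iic x, gg t = ∫ t, gg t := by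
    rw [TT, add_comm, ← Set.compl_Iic]
    exact integral_add_compl measurableSet_Iic gg_int
  have h2 : TT 0 + ∫ t in Set.Iic (0:ℝ), gg t = ∫ t, gg t := by
    rw [TT, add_comm, ← Set.compl_Iic]
    exact integral_add_compl measurableSet_Iic gg_int
  have h3 := intervalIntegral.integral_Iic_sub_Iic
    (gg_int.integrableOn (s := Set.Iic (0:ℝ))) (gg_int.integrableOn (s := Set.Iic x))
  linarith

lemma TT_hasDeriv (x : ℝ) : HasDerivAt TT (-gg x) x := by
  have h : HasDerivAt (fun u : ℝ => TT 0 - ∫ t in (0:ℝ)..u, gg t) (-gg x) x := by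
    have hd : HasDerivAt (fun u : ℝ => ∫ t in (0:ℝ)..u, gg t) (gg x) x :=
      intervalIntegral.integral_hasDerivAt_right gg_int.intervalIntegrable
        (gg_cont.stronglyMeasurableAtFilter _ _) gg_cont.continuousAt
    simpa using (hd.const_sub (TT 0))
  have : TT = fun u : ℝ => TT 0 - ∫ t in (0:ℝ)..u, gg t := funext TT_eq
  rw [this]
  exact h

lemma TT_cont : Continuous TT :=
  continuous_iff_continuousAt.mpr fun x => (TT_hasDeriv x).continuousAt

lemma neg_gg_hasDeriv (t : ℝ) : HasDerivAt (fun u => -gg u) (t * gg t) t := by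
  exact (gg_hasDeriv t).neg.congr_deriv (by ring)

lemma id_mul_gg_integrableOn (x : ℝ) (hx : 0 < x) :
    IntegrableOn (fun t => t * gg t) (Set.Ioi x) := by
  refine integrableOn_Ioi_deriv_of_nonneg' (fun t ht => neg_gg_hasDeriv t)
    (fun t ht => ?_) (l := 0) (by simpa using gg_tendsto.neg)
  have h : (0:ℝ) < t := hx.trans ht
  exact mul_nonneg h.le (gg_pos t).le

lemma tail_bound (x : ℝ) (hx : 0 < x) : x * TT x ≤ gg x := by
  have key : ∫ t in Set.Ioi x, t * gg t = gg x := by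
    have := integral_Ioi_of_hasDerivAt_of_tendsto' (fun t _ => neg_gg_hasDeriv t)
      (id_mul_gg_integrableOn x hx) (by simpa using gg_tendsto.neg)
    simpa using this
  calc x * TT x = ∫ t in Set.Ioi x, x * gg t := by
        rw [TT, MeasureTheory.integral_const_mul]
    _ ≤ ∫ t in Set.Ioi x, t * gg t := by
        refine setIntegral_mono_on ((gg_int.integrableOn).const_mul x)
          (id_mul_gg_integrableOn x hx) measurableSet_Ioi fun t ht => ?_
        exact mul_le_mul_of_nonneg_right (le_of_lt ht) (gg_pos t).le
    _ = gg x := key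

lemma mills_hasDeriv (x : ℝ) :
    HasDerivAt (fun u => TT u / gg u)
      ((-gg x * gg x - TT x * (-x * gg x)) / gg x ^ 2) x :=
  (TT_hasDeriv x).div (gg_hasDeriv x) (gg_pos x).ne'

lemma mills_anti : AntitoneOn (fun u => TT u / gg u) (Set.Ici 0) := by
  refine AntitoneOn.mono (antitoneOn_of_deriv_nonpos (convex_Ici 0)
    (Continuous.continuousOn (TT_cont.div gg_cont fun x => (gg_pos x).ne'))
    (fun x hx => (mills_hasDeriv x).differentiableAt.differentiableWithinAt)
    fun x hx => ?_) le_rfl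
  rw [(mills_hasDeriv x).deriv]
  rw [interior_Ici] at hx
  have h1 := tail_bound x hx
  have h2 := gg_pos x
  have h3 := TT_pos x
  apply div_nonpos_of_nonpos_of_nonneg
  · nlinarith
  · positivity

lemma key_ineq {a s : ℝ} (ha : 0 ≤ a) (hs : 0 < s) :
    gg a * TT (s + a) ≤ gg (s + a) * TT a := by
  have h := mills_anti ha (by positivity : (0:ℝ) ≤ s + a) (by linarith)
  have h1 := gg_pos a
  have h2 := gg_pos (s + a)
  rw [div_le_div_iff₀ h2 h1] at h
  linarith

lemma G_hasDeriv (s x : ℝ) :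
    HasDerivAt (fun u => TT (s + u) / TT u)
      ((-gg (s + x) * TT x - TT (s + x) * -gg x) / TT x ^ 2) x := by
  have h1 : HasDerivAt (fun u : ℝ => TT (s + u)) (-gg (s + x)) x := by
    have := (TT_hasDeriv (s + x)).comp x ((hasDerivAt_id x).const_add s)
    exact this.congr_deriv (by ring)
  exact h1.div (TT_hasDeriv x) (TT_pos x).ne'

lemma G_anti (s : ℝ) (hs : 0 < s) : AntitoneOn (fun u => TT (s + u) / TT u) (Set.Ici 0) := by
  refine antitoneOn_of_deriv_nonpos (convex_Ici 0)
    (Continuous.continuousOn (((TT_cont.comp (continuous_const.add continuous_id)).div TT_cont fun x => (TT_pos x).ne')))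
    (fun x hx => (G_hasDeriv s x).differentiableAt.differentiableWithinAt)
    fun x hx => ?_
  rw [(G_hasDeriv s x).deriv]
  rw [interior_Ici] at hx
  have h := key_ineq hx.le hs
  have h3 := TT_pos x
  apply div_nonpos_of_nonpos_of_nonneg
  · nlinarith
  · positivity

lemma TT_ratio_le {a s : ℝ} (ha : 0 ≤ a) (hs : 0 < s) :
    TT (s + a) / TT a ≤ TT s / TT 0 := by
  have h := G_anti s hs (Set.self_mem_Ici) ha ha
  simpa using h

lemma gauss_Ici (c : ℝ) :
    (gaussianReal 0 1) (Set.Ici c) = ENNReal.ofReal ((Real.sqrt (2 * π))⁻¹ * TT c) := by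
  rw [gaussianReal_apply_eq_integral 0 one_ne_zero, integral_Ici_eq_integral_Ioi]
  congr 1
  rw [TT, ← MeasureTheory.integral_const_mul]
  refine setIntegral_congr_fun measurableSet_Ioi fun x _ => ?_
  simp only [gaussianPDFReal, gg, NNReal.coe_one, mul_one, sub_zero]
  rw [neg_div]

lemma gauss_Ioi (c : ℝ) :
    (gaussianReal 0 1) (Set.Ioi c) = ENNReal.ofReal ((Real.sqrt (2 * π))⁻¹ * TT c) := by
  rw [← gauss_Ici, gaussianReal_apply_eq_integral 0 one_ne_zero,
    gaussianReal_apply_eq_integral 0 one_ne_zero, integral_Ici_eq_integral_Ioi]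

/-- For Z standard Gaussian, q > 0, μ ≤ 0,
P(Z + μ > √q | Z + μ ≥ 0) ≤ P(Z > √q | Z ≥ 0). -/
theorem stmt0 (q μ : ℝ) (hq : 0 < q) (hμ : μ ≤ 0) :
    (gaussianReal 0 1) {z : ℝ | z + μ > Real.sqrt q ∧ z + μ ≥ 0} /
      (gaussianReal 0 1) {z : ℝ | z + μ ≥ 0} ≤
    (gaussianReal 0 1) {z : ℝ | z > Real.sqrt q ∧ z ≥ 0} /
      (gaussianReal 0 1) {z : ℝ | z ≥ 0} := by
  have hsq : 0 < Real.sqrt q := Real.sqrt_pos.mpr hq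
  have hS1 : {z : ℝ | z + μ > Real.sqrt q ∧ z + μ ≥ 0} = Set.Ioi (Real.sqrt q + -μ) := by
    ext z
    simp only [Set.mem_setOf_eq, Set.mem_Ioi]
    constructor
    · rintro ⟨h1, _⟩; linarith
    · intro h; constructor <;> linarith
  have hS2 : {z : ℝ | z + μ ≥ 0} = Set.Ici (-μ) := by
    ext z; simp only [Set.mem_setOf_eq, Set.mem_Ici]; constructor <;> intro h <;> linarith
  have hS3 : {z : ℝ | z > Real.sqrt q ∧ z ≥ 0} = Set.Ioi (Real.sqrt q) := by
    ext z
    simp only [Set.mem_setOf_eq, Set.mem_Ioi]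
    constructor
    · rintro ⟨h1, _⟩; exact h1
    · intro h; exact ⟨h, by linarith⟩
  have hS4 : {z : ℝ | z ≥ 0} = Set.Ici (0:ℝ) := rfl
  rw [hS1, hS2, hS3, hS4, gauss_Ioi, gauss_Ici, gauss_Ioi, gauss_Ici]
  have hc : (0:ℝ) < (Real.sqrt (2 * π))⁻¹ := by
    rw [inv_pos]
    exact Real.sqrt_pos.mpr (by positivity)
  rw [← ENNReal.ofReal_div_of_pos (mul_pos hc (TT_pos _)),
    ← ENNReal.ofReal_div_of_pos (mul_pos hc (TT_pos _))]
  apply ENNReal.ofReal_le_ofReal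
  rw [mul_div_mul_left _ _ hc.ne', mul_div_mul_left _ _ hc.ne']
  exact TT_ratio_le (by linarith) hsq
end

section
/- The function f(x) = (1 - Φ(-x + c)) / (1 - Φ(-x)) is increasing in x on ℝ, for any fixed c > 0, where Φ is the standard normal CDF. -/
open MeasureTheory ProbabilityTheory Set Filter
open scoped Real Topology

/-- The standard normal CDF. -/
noncomputable def stdNormalCDF (x : ℝ) : ℝ :=
  ((gaussianReal 0 1) (Set.Iic x)).toReal

namespace StdNormalAux

/-- standard normal pdf -/
noncomputable def phi (x : ℝ) : ℝ := (Real.sqrt (2 * Real.pi))⁻¹ * Real.exp (-x ^ 2 / 2)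

lemma phi_eq : phi = gaussianPDFReal 0 1 := by
  funext x
  simp [phi, gaussianPDFReal]

lemma phi_pos (x : ℝ) : 0 < phi x := by
  have h : 0 < Real.sqrt (2 * Real.pi) := Real.sqrt_pos.2 (by positivity)
  exact mul_pos (inv_pos.2 h) (Real.exp_pos _)

lemma phi_neg (x : ℝ) : phi (-x) = phi x := by simp [phi]

lemma continuous_phi : Continuous phi := by
  unfold phi; fun_prop

lemma integrable_phi : Integrable phi := phi_eq ▸ integrable_gaussianPDFReal 0 1

lemma integral_phi : ∫ t, phi t = 1 := phi_eq ▸ integral_gaussianPDFReal_eq_one 0 one_ne_zero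

lemma hasDerivAt_phi (x : ℝ) : HasDerivAt phi (-x * phi x) x := by
  have h1 : HasDerivAt (fun y : ℝ => -y ^ 2 / 2) (-x) x := by
    have := ((hasDerivAt_pow 2 x).neg).div_const 2
    simpa using this.congr_deriv (by ring)
  have h2 := (h1.exp).const_mul (Real.sqrt (2 * Real.pi))⁻¹
  exact h2.congr_deriv (by unfold phi; ring)

lemma integrable_mul_phi : Integrable (fun t : ℝ => -t * phi t) := by
  have h := (integrable_mul_exp_neg_mul_sq (b := (1:ℝ)/2) (by norm_num)).const_mul
    (-(Real.sqrt (2 * Real.pi))⁻¹)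
  refine h.congr (ae_of_all _ fun t => ?_)
  unfold phi
  ring_nf

lemma cdf_eq (x : ℝ) : stdNormalCDF x = ∫ t in Iic x, phi t := by
  rw [stdNormalCDF, gaussianReal_apply_eq_integral 0 one_ne_zero, ENNReal.toReal_ofReal, phi_eq]
  exact integral_nonneg fun t => gaussianPDFReal_nonneg _ _ _

lemma setIntegral_phi_pos {s : Set ℝ} (h : 0 < volume s) : 0 < ∫ t in s, phi t := by
  rw [setIntegral_pos_iff_support_of_nonneg_ae
    (ae_of_all _ fun t => (phi_pos t).le) integrable_phi.integrableOn]
  exact lt_of_lt_of_le h (measure_mono fun t ht => ⟨(phi_pos t).ne', ht⟩)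

lemma cdf_pos (x : ℝ) : 0 < stdNormalCDF x := by
  rw [cdf_eq]
  exact setIntegral_phi_pos (by simp)

lemma cdf_lt_one (x : ℝ) : stdNormalCDF x < 1 := by
  have h := intervalIntegral.integral_Iic_add_Ioi (b := x) integrable_phi.integrableOn integrable_phi.integrableOn
  rw [integral_phi] at h
  have h2 : 0 < ∫ t in Ioi x, phi t := setIntegral_phi_pos (by simp)
  rw [cdf_eq]; linarith

lemma one_sub_cdf_neg (x : ℝ) : 1 - stdNormalCDF (-x) = stdNormalCDF x := by
  have h1 : stdNormalCDF (-x) = ∫ t in Ioi x, phi t := by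
    have h0 := integral_comp_neg_Iic (-x) phi
    simp only [neg_neg] at h0
    rw [cdf_eq, ← h0]
    exact setIntegral_congr_fun measurableSet_Iic fun t _ => (phi_neg t).symm
  have h := intervalIntegral.integral_Iic_add_Ioi (b := x) integrable_phi.integrableOn integrable_phi.integrableOn
  rw [integral_phi] at h
  rw [h1, cdf_eq]; linarith

lemma hasDerivAt_cdf (x : ℝ) : HasDerivAt stdNormalCDF (phi x) x := by
  have key : ∀ y : ℝ, stdNormalCDF y = stdNormalCDF 0 + ∫ t in (0:ℝ)..y, phi t := by
    intro y
    rw [cdf_eq, cdf_eq,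
      ← intervalIntegral.integral_Iic_sub_Iic integrable_phi.integrableOn integrable_phi.integrableOn]
    ring
  have h : HasDerivAt (fun y : ℝ => stdNormalCDF 0 + ∫ t in (0:ℝ)..y, phi t) (phi x) x := by
    exact (intervalIntegral.integral_hasDerivAt_right
      integrable_phi.intervalIntegrable
      continuous_phi.stronglyMeasurable.stronglyMeasurableAtFilter
      continuous_phi.continuousAt).const_add _
  exact h.congr_of_eventuallyEq (Eventually.of_forall key)

/-- Mills-type inequality -/
lemma mills (x : ℝ) : 0 < phi x + x * stdNormalCDF x := by
  rcases le_or_gt 0 x with hx | hx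
  · have := phi_pos x
    have := cdf_pos x
    nlinarith
  · -- x < 0
    have key : ∫ t in Iic x, -t * phi t = phi x := by
      have := integral_Iic_of_hasDerivAt_of_tendsto' (f := phi) (f' := fun t => -t * phi t)
        (a := x) (m := 0) (fun t _ => hasDerivAt_phi t) integrable_mul_phi.integrableOn ?_
      · rw [this, sub_zero]
      · -- Tendsto phi atBot (𝓝 0)
        have h1 : Tendsto (fun y : ℝ => -y ^ 2 / 2) atBot atBot := by
          apply Tendsto.atBot_div_const (by norm_num : (0:ℝ) < 2)
          apply tendsto_neg_atTop_atBot.comp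
          have : Tendsto (fun y : ℝ => |y| ^ 2) atBot atTop :=
            (tendsto_pow_atTop (by norm_num)).comp tendsto_abs_atBot_atTop
          simpa [sq_abs] using this
        have h2 : Tendsto (fun y : ℝ => Real.exp (-y ^ 2 / 2)) atBot (𝓝 0) :=
          Real.tendsto_exp_atBot.comp h1
        have h3 := h2.const_mul (Real.sqrt (2 * Real.pi))⁻¹
        rw [mul_zero] at h3
        exact h3
    have htint : IntegrableOn (fun t => -t * phi t) (Iic x) := integrable_mul_phi.integrableOn
    have hgint : IntegrableOn (fun t => (x - t) * phi t) (Iic x) := by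
      have heq : (fun t : ℝ => (x - t) * phi t) = fun t => -t * phi t + x * phi t := by
        funext t; ring
      rw [heq]
      exact (integrable_mul_phi.add (integrable_phi.const_mul x)).integrableOn
    have hdiff : 0 < ∫ t in Iic x, (x - t) * phi t := by
      rw [setIntegral_pos_iff_support_of_nonneg_ae ?_ hgint]
      · refine lt_of_lt_of_le ?_ (measure_mono (fun t (ht : t ∈ Iio x) => ?_))
        · simp
        · refine ⟨?_, Iio_subset_Iic_self ht⟩
          simp only [Function.mem_support]
          exact (mul_pos (by linarith [ht.out] : (0:ℝ) < x - t) (phi_pos t)).ne'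
      · rw [EventuallyLE, ae_restrict_iff' measurableSet_Iic]
        refine ae_of_all _ fun t ht => ?_
        simpa using mul_nonneg (by linarith [ht.out] : (0:ℝ) ≤ x - t) (phi_pos t).le
    have hsplit : ∫ t in Iic x, (x - t) * phi t
        = (∫ t in Iic x, -t * phi t) + x * ∫ t in Iic x, phi t := by
      rw [← integral_const_mul, ← integral_add htint ((integrable_phi.const_mul x).integrableOn)]
      exact setIntegral_congr_fun measurableSet_Iic fun t _ => by ring
    rw [hsplit, key, ← cdf_eq] at hdiff
    linarith

/-- The inverse Mills-type ratio φ/Φ is strictly decreasing. -/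
lemma strictAnti_ratio : StrictAnti (fun x => phi x / stdNormalCDF x) := by
  have hd : ∀ x, HasDerivAt (fun x => phi x / stdNormalCDF x)
      ((-x * phi x * stdNormalCDF x - phi x * phi x) / stdNormalCDF x ^ 2) x :=
    fun x => (hasDerivAt_phi x).div (hasDerivAt_cdf x) (cdf_pos x).ne'
  apply strictAnti_of_deriv_neg
  intro x
  rw [(hd x).deriv]
  apply div_neg_of_neg_of_pos
  · have h1 := mills x
    have h2 := phi_pos x
    nlinarith
  · exact pow_pos (cdf_pos x) 2

lemma strictMono_g (c : ℝ) (hc : 0 < c) :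
    StrictMono (fun x : ℝ => stdNormalCDF (x - c) / stdNormalCDF x) := by
  have hd : ∀ x, HasDerivAt (fun x : ℝ => stdNormalCDF (x - c) / stdNormalCDF x)
      ((phi (x - c) * stdNormalCDF x - stdNormalCDF (x - c) * phi x) / stdNormalCDF x ^ 2) x := by
    intro x
    have h1 : HasDerivAt (fun x : ℝ => stdNormalCDF (x - c)) (phi (x - c)) x := by
      have := (hasDerivAt_cdf (x - c)).comp x ((hasDerivAt_id x).sub_const c)
      rw [mul_one] at this
      exact this
    exact h1.div (hasDerivAt_cdf x) (cdf_pos x).ne'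
  apply strictMono_of_deriv_pos
  intro x
  rw [(hd x).deriv]
  apply div_pos ?_ (pow_pos (cdf_pos x) 2)
  have hratio : phi x / stdNormalCDF x < phi (x - c) / stdNormalCDF (x - c) :=
    strictAnti_ratio (by linarith)
  rw [div_lt_div_iff₀ (cdf_pos x) (cdf_pos (x - c))] at hratio
  nlinarith

end StdNormalAux

/-- x ↦ (1 - Φ(-x + c)) / (1 - Φ(-x)) is increasing, for c > 0. -/
theorem stmt1 (c : ℝ) (hc : 0 < c) :
    StrictMono (fun x : ℝ => (1 - stdNormalCDF (-x + c)) / (1 - stdNormalCDF (-x))) := by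
  have heq : (fun x : ℝ => (1 - stdNormalCDF (-x + c)) / (1 - stdNormalCDF (-x)))
      = fun x : ℝ => stdNormalCDF (x - c) / stdNormalCDF x := by
    funext x
    rw [show -x + c = -(x - c) by ring, StdNormalAux.one_sub_cdf_neg,
      StdNormalAux.one_sub_cdf_neg]
  rw [heq]
  exact StdNormalAux.strictMono_g c hc
end

section
/- The inverse Mill's ratio a ↦ φ(a)/(1 - Φ(a)) is strictly increasing on ℝ, where φ and Φ are the standard normal density and CDF. -/
open MeasureTheory ProbabilityTheory Real Set Filter

section aux

local notation "φ" => gaussianPDFReal 0 1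

lemma phi_eq' : gaussianPDFReal 0 1 = fun x => (Real.sqrt (2*π))⁻¹ * Real.exp (-(x^2)/2) := by
  funext x; simp [gaussianPDFReal]

lemma phi_cont : Continuous φ := by
  rw [phi_eq']; fun_prop

lemma phi_pos (x : ℝ) : 0 < φ x := gaussianPDFReal_pos 0 1 x one_ne_zero

lemma phi_hasDeriv (x : ℝ) : HasDerivAt φ (-x * φ x) x := by
  rw [phi_eq']
  have h1 : HasDerivAt (fun t : ℝ => -(t^2)/2) (-x) x := by
    have := ((hasDerivAt_pow 2 x).neg).div_const 2
    exact this.congr_deriv (by norm_num; ring)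
  have h2 := (h1.exp).const_mul (Real.sqrt (2*π))⁻¹
  exact h2.congr_deriv (by ring)

lemma cdf_eq (x : ℝ) : stdNormalCDF x = ∫ t in Iic x, φ t := by
  rw [stdNormalCDF, gaussianReal_apply_eq_integral 0 one_ne_zero,
    ENNReal.toReal_ofReal (setIntegral_nonneg measurableSet_Iic
      (fun t _ => gaussianPDFReal_nonneg 0 1 t))]

lemma tail_eq (x : ℝ) : 1 - stdNormalCDF x = ∫ t in Ioi x, φ t := by
  have h := intervalIntegral.integral_Iic_add_Ioi (b := x) (f := φ)
    (integrable_gaussianPDFReal 0 1).integrableOn (integrable_gaussianPDFReal 0 1).integrableOn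
  rw [integral_gaussianPDFReal_eq_one 0 one_ne_zero] at h
  rw [cdf_eq]; linarith

lemma tail_pos (x : ℝ) : 0 < ∫ t in Ioi x, φ t := by
  rw [setIntegral_pos_iff_support_of_nonneg_ae
    (ae_of_all _ fun t => gaussianPDFReal_nonneg 0 1 t)
    (integrable_gaussianPDFReal 0 1).integrableOn]
  have : Function.support φ ∩ Ioi x = Ioi x := by
    apply inter_eq_self_of_subset_right
    intro t _; exact (phi_pos t).ne'
  rw [this, Real.volume_Ioi]
  simp

lemma cdf_hasDeriv (x : ℝ) : HasDerivAt stdNormalCDF (φ x) x := by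
  have key : stdNormalCDF = fun y => stdNormalCDF 0 + ∫ t in (0:ℝ)..y, φ t := by
    funext y
    rw [cdf_eq, cdf_eq, ← intervalIntegral.integral_Iic_sub_Iic
      (integrable_gaussianPDFReal 0 1).integrableOn (integrable_gaussianPDFReal 0 1).integrableOn]
    ring
  rw [key]
  exact (intervalIntegral.integral_hasDerivAt_right
    ((integrable_gaussianPDFReal 0 1).intervalIntegrable)
    (phi_cont.stronglyMeasurable.stronglyMeasurableAtFilter)
    phi_cont.continuousAt).const_add _

lemma integrable_mul_phi : Integrable (fun t : ℝ => t * φ t) := by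
  have h := (integrable_mul_exp_neg_mul_sq (b := 1/2) (by norm_num)).const_mul
    (Real.sqrt (2*π))⁻¹
  apply h.congr (ae_of_all _ fun t => ?_)
  rw [phi_eq']
  ring_nf

lemma tail_mean (x : ℝ) : ∫ t in Ioi x, t * φ t = φ x := by
  have hderiv : ∀ t ∈ Ici x, HasDerivAt (fun u => -φ u) (t * φ t) t := by
    intro t _
    have := (phi_hasDeriv t).neg
    exact this.congr_deriv (by ring)
  have htend : Tendsto (fun u => -φ u) atTop (nhds 0) := by
    rw [phi_eq']
    rw [show (0:ℝ) = -((Real.sqrt (2*π))⁻¹ * 0) by ring]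
    apply Tendsto.neg
    apply Tendsto.const_mul
    apply Real.tendsto_exp_atBot.comp
    have : Tendsto (fun t : ℝ => t^2) atTop atTop := tendsto_pow_atTop two_ne_zero
    exact (tendsto_neg_atBot_iff.mpr this).atBot_div_const (by norm_num)
  have := integral_Ioi_of_hasDerivAt_of_tendsto
    ((phi_cont.neg.continuousAt (x := x)).continuousWithinAt)
    (fun t ht => hderiv t (mem_Ici.mpr (le_of_lt ht))) integrable_mul_phi.integrableOn htend
  rw [this, Pi.neg_apply]; ring

lemma key_ineq_s2 (x : ℝ) : x * (1 - stdNormalCDF x) < φ x := by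
  rw [tail_eq]
  have hsub : φ x - x * ∫ t in Ioi x, φ t = ∫ t in Ioi x, (t - x) * φ t := by
    rw [← tail_mean x, ← integral_const_mul, ← integral_sub integrable_mul_phi.integrableOn
      ((integrable_gaussianPDFReal 0 1).integrableOn.const_mul x)]
    congr 1; funext t; ring
  have hpos : 0 < ∫ t in Ioi x, (t - x) * φ t := by
    rw [setIntegral_pos_iff_support_of_nonneg_ae]
    · have : Function.support (fun t => (t - x) * φ t) ∩ Ioi x = Ioi x := by
        apply inter_eq_self_of_subset_right
        intro t ht
        exact mul_ne_zero (sub_ne_zero.mpr (ne_of_gt ht)) (phi_pos t).ne'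
      rw [this, Real.volume_Ioi]; simp
    · filter_upwards [ae_restrict_mem measurableSet_Ioi] with t ht
      exact mul_nonneg (by linarith [mem_Ioi.mp ht]) (gaussianPDFReal_nonneg 0 1 t)
    · exact (integrable_mul_phi.sub ((integrable_gaussianPDFReal 0 1).const_mul x)).integrableOn.congr
        (ae_of_all _ fun t => by simp only [Pi.sub_apply]; ring)
  linarith

end aux

/-- the inverse Mill's ratio a ↦ φ(a)/(1 - Φ(a)) is strictly increasing. -/
theorem stmt2 :
    StrictMono (fun a : ℝ => gaussianPDFReal 0 1 a / (1 - stdNormalCDF a)) := by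
  set φ := gaussianPDFReal 0 1
  have htail : ∀ x, 0 < 1 - stdNormalCDF x := fun x => (tail_eq x) ▸ tail_pos x
  apply strictMono_of_hasDerivAt_pos
    (f' := fun x => ((-x * φ x) * (1 - stdNormalCDF x) - φ x * (-(φ x))) / (1 - stdNormalCDF x)^2)
  · intro x
    exact (phi_hasDeriv x).div ((cdf_hasDeriv x).const_sub 1) (htail x).ne'
  · intro x
    apply div_pos
    · have h1 := key_ineq_s2 x
      have h2 := phi_pos x
      nlinarith
    · exact pow_pos (htail x) 2
end

section
/- Let Y = (Y₁, Y₂) with Y₁, Y₂ independent N(μᵢ, 1) and μ₁ ≤ 0, μ₂ ≤ 0. Let q₂ be the (1-α)-quantile of χ²(2). Then P(Y₁² + Y₂² > q₂ | Y₁ ≥ 0, Y₂ ≥ 0) ≤ α. -/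
open MeasureTheory ProbabilityTheory Real
open scoped ENNReal

/-! ### Auxiliary lemmas -/

section Aux

lemma pt_ineq' {a b c d : ℝ≥0∞} (hab : a ≤ b) (hcd : c ≤ d) :
    a * d + b * c ≤ a * c + b * d := by
  obtain ⟨e, rfl⟩ := exists_add_of_le hcd
  calc a * (c + e) + b * c = a * c + (a * e + b * c) := by ring
    _ ≤ a * c + (b * e + b * c) :=
        add_le_add_right (add_le_add_left (mul_le_mul_left hab e) _) _
    _ = a * c + b * (c + e) := by ring

/-- Chebyshev's integral inequality (negative association form) for `ℝ≥0∞`-valued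
functions: a monotone and an antitone function are negatively correlated. -/
lemma cheb_one (ν : Measure ℝ) (f g : ℝ → ℝ≥0∞) (hf : Monotone f) (hg : Antitone g)
    (hfm : Measurable f) (hgm : Measurable g) :
    (∫⁻ x, f x * g x ∂ν) * ν Set.univ ≤ (∫⁻ x, f x ∂ν) * ∫⁻ x, g x ∂ν := by
  have key : ∀ x y, f x * g x + f y * g y ≤ f x * g y + f y * g x := by
    intro x y
    rcases le_total x y with h | h
    · exact pt_ineq' (hf h) (hg h)
    · have := pt_ineq' (hf h) (hg h)
      calc f x * g x + f y * g y = f y * g y + f x * g x := by ring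
        _ ≤ f y * g x + f x * g y := this
        _ = f x * g y + f y * g x := by ring
  have h2 : ∫⁻ x, ∫⁻ y, (f x * g x + f y * g y) ∂ν ∂ν
      ≤ ∫⁻ x, ∫⁻ y, (f x * g y + f y * g x) ∂ν ∂ν :=
    lintegral_mono fun x => lintegral_mono fun y => key x y
  have hL : ∫⁻ x, ∫⁻ y, (f x * g x + f y * g y) ∂ν ∂ν
      = (∫⁻ x, f x * g x ∂ν) * ν Set.univ + (∫⁻ x, f x * g x ∂ν) * ν Set.univ := by
    have : ∀ x, ∫⁻ y, (f x * g x + f y * g y) ∂ν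
        = f x * g x * ν Set.univ + ∫⁻ y, f y * g y ∂ν := by
      intro x
      rw [lintegral_add_right _ (g := fun y => f y * g y) (hfm.mul hgm), lintegral_const]
    simp_rw [this]
    rw [lintegral_add_right _ measurable_const,
      lintegral_mul_const _ (f := fun y => f y * g y) (hfm.mul hgm), lintegral_const, mul_comm (∫⁻ y, f y * g y ∂ν)]
  have hR : ∫⁻ x, ∫⁻ y, (f x * g y + f y * g x) ∂ν ∂ν
      = (∫⁻ x, f x ∂ν) * (∫⁻ x, g x ∂ν) + (∫⁻ x, f x ∂ν) * (∫⁻ x, g x ∂ν) := by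
    have : ∀ x, ∫⁻ y, (f x * g y + f y * g x) ∂ν
        = f x * ∫⁻ y, g y ∂ν + (∫⁻ y, f y ∂ν) * g x := by
      intro x
      rw [lintegral_add_left (hgm.const_mul _), lintegral_const_mul _ hgm,
        lintegral_mul_const _ hfm]
    simp_rw [this]
    rw [lintegral_add_right _ (hgm.const_mul _), lintegral_mul_const _ hfm,
      lintegral_const_mul _ hgm]
  rw [hL, hR] at h2
  rw [← two_mul, ← two_mul] at h2
  rwa [ENNReal.mul_le_mul_iff_right (by norm_num) (by norm_num)] at h2

/-- A two-dimensional Harris/FKG-type inequality for a product measure: a (coordinatewise)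
monotone function and a product of antitone functions are negatively correlated. -/
lemma cheb_two (ν₁ ν₂ : Measure ℝ) [SigmaFinite ν₁] [SigmaFinite ν₂]
    (F : ℝ × ℝ → ℝ≥0∞) (g₁ g₂ : ℝ → ℝ≥0∞)
    (hF : Monotone F) (hFm : Measurable F)
    (hg₁ : Antitone g₁) (hg₁m : Measurable g₁)
    (hg₂ : Antitone g₂) (hg₂m : Measurable g₂) :
    (∫⁻ p, F p * (g₁ p.1 * g₂ p.2) ∂(ν₁.prod ν₂)) * (ν₁ Set.univ * ν₂ Set.univ)
      ≤ (∫⁻ p, F p ∂(ν₁.prod ν₂)) * ((∫⁻ x, g₁ x ∂ν₁) * ∫⁻ y, g₂ y ∂ν₂) := by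
  set Φ : ℝ → ℝ≥0∞ := fun x => ∫⁻ y, F (x, y) ∂ν₂ with hΦ
  have hΦmono : Monotone Φ := fun x x' h =>
    lintegral_mono fun y => hF (Prod.mk_le_mk.2 ⟨h, le_rfl⟩)
  have hΦm : Measurable Φ := hFm.lintegral_prod_right'
  have hFxm : ∀ x, Measurable fun y => F (x, y) := fun x => hFm.comp (measurable_prodMk_left)
  have inner : ∀ x, (∫⁻ y, F (x, y) * g₂ y ∂ν₂) * ν₂ Set.univ ≤ Φ x * ∫⁻ y, g₂ y ∂ν₂ := by
    intro x
    exact cheb_one ν₂ (fun y => F (x, y)) g₂ (fun y y' h => hF (Prod.mk_le_mk.2 ⟨le_rfl, h⟩))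
      hg₂ (hFxm x) hg₂m
  have hH : Measurable fun p : ℝ × ℝ => F p * (g₁ p.1 * g₂ p.2) :=
    hFm.mul ((hg₁m.comp measurable_fst).mul (hg₂m.comp measurable_snd))
  have step1 : ∫⁻ p, F p * (g₁ p.1 * g₂ p.2) ∂(ν₁.prod ν₂)
      = ∫⁻ x, g₁ x * ∫⁻ y, F (x, y) * g₂ y ∂ν₂ ∂ν₁ := by
    rw [lintegral_prod _ hH.aemeasurable]
    congr 1; funext x
    rw [← lintegral_const_mul _ (f := fun y => F (x, y) * g₂ y) ((hFxm x).mul hg₂m)]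
    congr 1; funext y; ring
  have step2 : (∫⁻ p, F p * (g₁ p.1 * g₂ p.2) ∂(ν₁.prod ν₂)) * ν₂ Set.univ
      ≤ (∫⁻ y, g₂ y ∂ν₂) * ∫⁻ x, Φ x * g₁ x ∂ν₁ := by
    have hgs : Measurable fun p : ℝ × ℝ => g₂ p.2 := hg₂m.comp measurable_snd
    have hin : Measurable fun x => ∫⁻ y, F (x, y) * g₂ y ∂ν₂ :=
      (hFm.mul hgs).lintegral_prod_right'
    rw [step1, ← lintegral_mul_const _ (f := fun x => g₁ x * ∫⁻ y, F (x, y) * g₂ y ∂ν₂) (hg₁m.mul hin)]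
    calc ∫⁻ x, g₁ x * (∫⁻ y, F (x, y) * g₂ y ∂ν₂) * ν₂ Set.univ ∂ν₁
        ≤ ∫⁻ x, g₁ x * (Φ x * ∫⁻ y, g₂ y ∂ν₂) ∂ν₁ := by
          apply lintegral_mono; intro x
          dsimp only
          rw [mul_assoc]
          exact mul_le_mul_right (inner x) _
      _ = (∫⁻ y, g₂ y ∂ν₂) * ∫⁻ x, Φ x * g₁ x ∂ν₁ := by
          rw [← lintegral_const_mul _ (f := fun x => Φ x * g₁ x) (hΦm.mul hg₁m)]
          congr 1; funext x; ring
  have step3 : (∫⁻ x, Φ x * g₁ x ∂ν₁) * ν₁ Set.univ ≤ (∫⁻ x, Φ x ∂ν₁) * ∫⁻ x, g₁ x ∂ν₁ :=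
    cheb_one ν₁ Φ g₁ hΦmono hg₁ hΦm hg₁m
  have hΦint : ∫⁻ x, Φ x ∂ν₁ = ∫⁻ p, F p ∂(ν₁.prod ν₂) := (lintegral_prod _ hFm.aemeasurable).symm
  calc (∫⁻ p, F p * (g₁ p.1 * g₂ p.2) ∂(ν₁.prod ν₂)) * (ν₁ Set.univ * ν₂ Set.univ)
      = (∫⁻ p, F p * (g₁ p.1 * g₂ p.2) ∂(ν₁.prod ν₂)) * ν₂ Set.univ * ν₁ Set.univ := by ring
    _ ≤ ((∫⁻ y, g₂ y ∂ν₂) * (∫⁻ x, Φ x * g₁ x ∂ν₁)) * ν₁ Set.univ := mul_le_mul_left step2 _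
    _ = (∫⁻ y, g₂ y ∂ν₂) * ((∫⁻ x, Φ x * g₁ x ∂ν₁) * ν₁ Set.univ) := by ring
    _ ≤ (∫⁻ y, g₂ y ∂ν₂) * ((∫⁻ x, Φ x ∂ν₁) * (∫⁻ x, g₁ x ∂ν₁)) := mul_le_mul_right step3 _
    _ = (∫⁻ p, F p ∂(ν₁.prod ν₂)) * ((∫⁻ x, g₁ x ∂ν₁) * ∫⁻ y, g₂ y ∂ν₂) := by rw [hΦint]; ring

/-- The density of `N(m,1)` with respect to `N(0,1)`. -/
noncomputable def wD (m : ℝ) : ℝ → ℝ≥0∞ := fun x => ENNReal.ofReal (rexp (m * x - m ^ 2 / 2))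

lemma wD_meas (m : ℝ) : Measurable (wD m) := by
  unfold wD; fun_prop

lemma wD_anti {m : ℝ} (hm : m ≤ 0) : Antitone (wD m) := by
  intro x y hxy
  exact ENNReal.ofReal_le_ofReal (Real.exp_le_exp.2 (by nlinarith))

lemma gauss_wd (m : ℝ) :
    gaussianReal m 1 = (gaussianReal 0 1).withDensity (wD m) := by
  rw [gaussianReal_of_var_ne_zero _ one_ne_zero, gaussianReal_of_var_ne_zero _ one_ne_zero,
    ← withDensity_mul _ (measurable_gaussianPDF 0 1) (wD_meas m)]
  congr 1
  funext x
  simp only [Pi.mul_apply, gaussianPDF, wD, gaussianPDFReal]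
  rw [← ENNReal.ofReal_mul (by positivity)]
  congr 1
  rw [mul_assoc _ (rexp _) (rexp _), ← Real.exp_add]
  congr 1
  push_cast
  ring

noncomputable abbrev Gstd : Measure ℝ := gaussianReal 0 1

lemma prodD (m₀ m₁ : ℝ) :
    (gaussianReal m₀ 1).prod (gaussianReal m₁ 1)
      = (Gstd.prod Gstd).withDensity (fun p => wD m₀ p.1 * wD m₁ p.2) := by
  refine Measure.prod_eq fun s t hs ht => ?_
  rw [withDensity_apply _ (hs.prod ht), ← Measure.prod_restrict,
    lintegral_prod_mul (wD_meas m₀).aemeasurable (wD_meas m₁).aemeasurable,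
    gauss_wd m₀, gauss_wd m₁, withDensity_apply _ hs, withDensity_apply _ ht]

lemma negPres : MeasurePreserving (fun x : ℝ => -x) Gstd Gstd := by
  refine ⟨measurable_neg, ?_⟩
  have h := gaussianReal_map_const_mul (μ := 0) (v := 1) (-1)
  have h2 : (NNReal.mk ((-1 : ℝ) ^ 2) (sq_nonneg _)) * 1 = 1 := by
    ext; norm_num
  rw [h2] at h
  simpa [neg_one_mul] using h

lemma Gstd_zero : Gstd {0} = 0 := by
  rw [gaussianReal_apply 0 one_ne_zero]
  exact setLIntegral_measure_zero _ _ (measure_singleton 0)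

lemma Gstd_Ici : Gstd (Set.Ici 0) = 1 / 2 := by
  have hsym : Gstd (Set.Ici 0) = Gstd (Set.Iic 0) := by
    have := negPres.measure_preimage (s := Set.Ici 0) measurableSet_Ici.nullMeasurableSet
    have hpre : (fun x : ℝ => -x) ⁻¹' Set.Ici 0 = Set.Iic 0 := by
      ext x; simp
    rw [hpre] at this
    exact this.symm
  have hadd : Gstd (Set.Ici 0) + Gstd (Set.Iic 0) = 1 := by
    have hu : Set.Ici (0:ℝ) ∪ Set.Iic 0 = Set.univ := by
      ext x; simp [le_total]
    have hi : Set.Ici (0:ℝ) ∩ Set.Iic 0 = {0} := by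
      ext x; simp [le_antisymm_iff, and_comm]
    have := measure_union_add_inter (μ := Gstd) (t := Set.Iic 0) (Set.Ici 0) measurableSet_Iic
    rw [hu, hi, Gstd_zero, add_zero, measure_univ] at this
    exact this.symm
  rw [← hsym, ← two_mul] at hadd
  rw [ENNReal.eq_div_iff (by norm_num) (by norm_num), hadd]

lemma G2_ax1 : (Gstd.prod Gstd) {p : ℝ × ℝ | p.1 = 0} = 0 := by
  have : {p : ℝ × ℝ | p.1 = 0} = ({0} : Set ℝ) ×ˢ (Set.univ : Set ℝ) := by
    ext ⟨x, y⟩; simp [Set.mem_prod, eq_comm]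
  rw [this, Measure.prod_prod, Gstd_zero, zero_mul]

lemma G2_ax2 : (Gstd.prod Gstd) {p : ℝ × ℝ | p.2 = 0} = 0 := by
  have : {p : ℝ × ℝ | p.2 = 0} = (Set.univ : Set ℝ) ×ˢ ({0} : Set ℝ) := by
    ext ⟨x, y⟩; simp [Set.mem_prod, eq_comm]
  rw [this, Measure.prod_prod, Gstd_zero, mul_zero]

lemma G2_axes : (Gstd.prod Gstd) {p : ℝ × ℝ | p.1 = 0 ∨ p.2 = 0} = 0 := by
  have h : {p : ℝ × ℝ | p.1 = 0 ∨ p.2 = 0}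
      = {p : ℝ × ℝ | p.1 = 0} ∪ {p : ℝ × ℝ | p.2 = 0} := rfl
  rw [h]
  exact measure_union_null G2_ax1 G2_ax2

lemma T1Pres : MeasurePreserving (Prod.map (fun x : ℝ => -x) id)
    (Gstd.prod Gstd) (Gstd.prod Gstd) := negPres.prod (MeasurePreserving.id _)

lemma T2Pres : MeasurePreserving (Prod.map (id : ℝ → ℝ) (fun x : ℝ => -x))
    (Gstd.prod Gstd) (Gstd.prod Gstd) := (MeasurePreserving.id _).prod negPres

/-- By the sign-flip symmetry of the standard two-dimensional Gaussian, the measure of a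
radial set intersected with the closed positive quadrant is a quarter of its total measure. -/
lemma quad (q : ℝ) :
    4 * (Gstd.prod Gstd) {p : ℝ × ℝ | q < p.1 ^ 2 + p.2 ^ 2 ∧ 0 ≤ p.1 ∧ 0 ≤ p.2}
      = (Gstd.prod Gstd) {p : ℝ × ℝ | q < p.1 ^ 2 + p.2 ^ 2} := by
  set G2 := Gstd.prod Gstd
  set s1 : Set (ℝ × ℝ) := {p | q < p.1 ^ 2 + p.2 ^ 2 ∧ 0 < p.1 ∧ 0 < p.2} with hs1
  set s2 : Set (ℝ × ℝ) := {p | q < p.1 ^ 2 + p.2 ^ 2 ∧ p.1 < 0 ∧ 0 < p.2} with hs2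
  set s3 : Set (ℝ × ℝ) := {p | q < p.1 ^ 2 + p.2 ^ 2 ∧ 0 < p.1 ∧ p.2 < 0} with hs3
  set s4 : Set (ℝ × ℝ) := {p | q < p.1 ^ 2 + p.2 ^ 2 ∧ p.1 < 0 ∧ p.2 < 0} with hs4
  have hm : ∀ (u v : Set ℝ), MeasurableSet u → MeasurableSet v →
      MeasurableSet {p : ℝ × ℝ | q < p.1 ^ 2 + p.2 ^ 2 ∧ p.1 ∈ u ∧ p.2 ∈ v} := by
    intro u v hu hv
    have h1 : MeasurableSet {p : ℝ × ℝ | q < p.1 ^ 2 + p.2 ^ 2} :=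
      measurableSet_lt measurable_const
        ((measurable_fst.pow_const 2).add (measurable_snd.pow_const 2))
    exact h1.inter ((measurable_fst hu).inter (measurable_snd hv))
  have hm1 : MeasurableSet s1 := hm _ _ measurableSet_Ioi measurableSet_Ioi
  have hm2 : MeasurableSet s2 := hm _ _ measurableSet_Iio measurableSet_Ioi
  have hm3 : MeasurableSet s3 := hm _ _ measurableSet_Ioi measurableSet_Iio
  have hm4 : MeasurableSet s4 := hm _ _ measurableSet_Iio measurableSet_Iio
  have e21 : G2 s2 = G2 s1 := by
    have h := T1Pres.measure_preimage hm2.nullMeasurableSet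
    have hpre : (Prod.map (fun x : ℝ => -x) id) ⁻¹' s2 = s1 := by
      ext ⟨x, y⟩
      simp only [hs1, hs2, hs3, hs4, Set.mem_preimage, Set.mem_setOf_eq, Prod.map_apply,
        id_eq]
      constructor <;> rintro ⟨h1, h2, h3⟩ <;>
        exact ⟨by nlinarith, by linarith, by linarith⟩
    rw [hpre] at h
    exact h.symm
  have e31 : G2 s3 = G2 s1 := by
    have h := T2Pres.measure_preimage hm3.nullMeasurableSet
    have hpre : (Prod.map (id : ℝ → ℝ) (fun x : ℝ => -x)) ⁻¹' s3 = s1 := by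
      ext ⟨x, y⟩
      simp only [hs1, hs2, hs3, hs4, Set.mem_preimage, Set.mem_setOf_eq, Prod.map_apply,
        id_eq]
      constructor <;> rintro ⟨h1, h2, h3⟩ <;>
        exact ⟨by nlinarith, by linarith, by linarith⟩
    rw [hpre] at h
    exact h.symm
  have e41 : G2 s4 = G2 s2 := by
    have h := T2Pres.measure_preimage hm4.nullMeasurableSet
    have hpre : (Prod.map (id : ℝ → ℝ) (fun x : ℝ => -x)) ⁻¹' s4 = s2 := by
      ext ⟨x, y⟩
      simp only [hs1, hs2, hs3, hs4, Set.mem_preimage, Set.mem_setOf_eq, Prod.map_apply,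
        id_eq]
      constructor <;> rintro ⟨h1, h2, h3⟩ <;>
        exact ⟨by nlinarith, by linarith, by linarith⟩
    rw [hpre] at h
    exact h.symm
  have hAB : G2 {p : ℝ × ℝ | q < p.1 ^ 2 + p.2 ^ 2 ∧ 0 ≤ p.1 ∧ 0 ≤ p.2} = G2 s1 := by
    refine le_antisymm ?_ (measure_mono ?_)
    · calc G2 {p : ℝ × ℝ | q < p.1 ^ 2 + p.2 ^ 2 ∧ 0 ≤ p.1 ∧ 0 ≤ p.2}
          ≤ G2 (s1 ∪ {p : ℝ × ℝ | p.1 = 0 ∨ p.2 = 0}) := by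
            apply measure_mono
            rintro p ⟨h1, h2, h3⟩
            rcases h2.eq_or_lt with h2' | h2'
            · exact Or.inr (Or.inl h2'.symm)
            · rcases h3.eq_or_lt with h3' | h3'
              · exact Or.inr (Or.inr h3'.symm)
              · exact Or.inl ⟨h1, h2', h3'⟩
        _ ≤ G2 s1 + G2 {p : ℝ × ℝ | p.1 = 0 ∨ p.2 = 0} := measure_union_le _ _
        _ = G2 s1 := by rw [G2_axes, add_zero]
    · rintro p ⟨h1, h2, h3⟩; exact ⟨h1, h2.le, h3.le⟩
  have hdis12 : Disjoint s1 s2 := by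
    rw [Set.disjoint_left]; rintro p ⟨_, h2, _⟩ ⟨_, h2', _⟩; exact absurd h2 (not_lt.2 h2'.le)
  have hdis34 : Disjoint s3 s4 := by
    rw [Set.disjoint_left]; rintro p ⟨_, h2, _⟩ ⟨_, h2', _⟩; exact absurd h2 (not_lt.2 h2'.le)
  have hdis : Disjoint (s1 ∪ s2) (s3 ∪ s4) := by
    rw [Set.disjoint_left]
    rintro p (⟨_, _, h3⟩ | ⟨_, _, h3⟩) (⟨_, _, h3'⟩ | ⟨_, _, h3'⟩) <;>
      exact absurd h3 (not_lt.2 h3'.le)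
  have hfull : G2 {p : ℝ × ℝ | q < p.1 ^ 2 + p.2 ^ 2}
      = G2 ((s1 ∪ s2) ∪ (s3 ∪ s4)) := by
    refine le_antisymm ?_ (measure_mono ?_)
    · calc G2 {p : ℝ × ℝ | q < p.1 ^ 2 + p.2 ^ 2}
          ≤ G2 (((s1 ∪ s2) ∪ (s3 ∪ s4)) ∪ {p : ℝ × ℝ | p.1 = 0 ∨ p.2 = 0}) := by
            apply measure_mono
            intro p h1
            rcases lt_trichotomy p.1 0 with hx | hx | hx
            · rcases lt_trichotomy p.2 0 with hy | hy | hy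
              · exact Or.inl (Or.inr (Or.inr ⟨h1, hx, hy⟩))
              · exact Or.inr (Or.inr hy)
              · exact Or.inl (Or.inl (Or.inr ⟨h1, hx, hy⟩))
            · exact Or.inr (Or.inl hx)
            · rcases lt_trichotomy p.2 0 with hy | hy | hy
              · exact Or.inl (Or.inr (Or.inl ⟨h1, hx, hy⟩))
              · exact Or.inr (Or.inr hy)
              · exact Or.inl (Or.inl (Or.inl ⟨h1, hx, hy⟩))
        _ ≤ G2 ((s1 ∪ s2) ∪ (s3 ∪ s4)) + G2 {p : ℝ × ℝ | p.1 = 0 ∨ p.2 = 0} :=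
            measure_union_le _ _
        _ = G2 ((s1 ∪ s2) ∪ (s3 ∪ s4)) := by rw [G2_axes, add_zero]
    · intro p hp
      rcases hp with ((h | h) | (h | h)) <;> exact h.1
  rw [hAB, hfull, measure_union hdis (hm3.union hm4), measure_union hdis12 hm2,
    measure_union hdis34 hm4, e21, e31, e41, e21]
  ring

end Aux

/-- The chi-squared distribution with `k` degrees of freedom, as the law of the
sum of squares of `k` independent standard Gaussians. -/
noncomputable def chiSq (k : ℕ) : Measure ℝ :=
  Measure.map (fun x : Fin k → ℝ => ∑ i, (x i) ^ 2)
    (Measure.pi fun _ : Fin k => gaussianReal 0 1)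

/-- for independent Yᵢ ~ N(μᵢ,1) with μᵢ ≤ 0 and q₂ the (1-α)-quantile
of χ²(2), P(Y₁² + Y₂² > q₂ | Y₁ ≥ 0, Y₂ ≥ 0) ≤ α. -/
theorem stmt6 (μ : Fin 2 → ℝ) (hμ : ∀ i, μ i ≤ 0) (α : ℝ) (hα : α ∈ Set.Ioo (0:ℝ) 1)
    (q₂ : ℝ) (hq₂ : chiSq 2 {x | q₂ < x} = ENNReal.ofReal α)
    (hpos : 0 < (Measure.pi fun i : Fin 2 => gaussianReal (μ i) 1)
      {y | 0 ≤ y 0 ∧ 0 ≤ y 1}) :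
    (Measure.pi fun i : Fin 2 => gaussianReal (μ i) 1)
        {y | (y 0) ^ 2 + (y 1) ^ 2 > q₂ ∧ 0 ≤ y 0 ∧ 0 ≤ y 1} /
      (Measure.pi fun i : Fin 2 => gaussianReal (μ i) 1) {y | 0 ≤ y 0 ∧ 0 ≤ y 1} ≤
    ENNReal.ofReal α := by
  classical
  set Pμ : Measure (ℝ × ℝ) := (gaussianReal (μ 0) 1).prod (gaussianReal (μ 1) 1) with hPμ
  set G2 : Measure (ℝ × ℝ) := Gstd.prod Gstd with hG2
  set A : Set (ℝ × ℝ) := {p | q₂ < p.1 ^ 2 + p.2 ^ 2} with hA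
  set B : Set (ℝ × ℝ) := Set.Ici (0:ℝ) ×ˢ Set.Ici (0:ℝ) with hB
  have hAmeas : MeasurableSet A :=
    measurableSet_lt measurable_const
      ((measurable_fst.pow_const 2).add (measurable_snd.pow_const 2))
  have hBmeas : MeasurableSet B := measurableSet_Ici.prod measurableSet_Ici
  -- transfer from `Measure.pi` to the product measure
  have hpi : (Measure.pi fun i : Fin 2 => gaussianReal (μ i) 1)
      = Measure.pi ![gaussianReal (μ 0) 1, gaussianReal (μ 1) 1] := by
    congr 1
    funext i
    fin_cases i <;> simp
  have hmp : MeasurePreserving (MeasurableEquiv.finTwoArrow)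
      (Measure.pi fun i : Fin 2 => gaussianReal (μ i) 1) Pμ := by
    rw [hpi, hPμ]
    exact measurePreserving_finTwoArrow_vec _ _
  have hset1 : {y : Fin 2 → ℝ | (y 0) ^ 2 + (y 1) ^ 2 > q₂ ∧ 0 ≤ y 0 ∧ 0 ≤ y 1}
      = MeasurableEquiv.finTwoArrow ⁻¹' (A ∩ B) := by
    ext y
    simp [hA, hB, MeasurableEquiv.finTwoArrow, Set.mem_prod, and_assoc, Prod.le_def]
  have hset2 : {y : Fin 2 → ℝ | 0 ≤ y 0 ∧ 0 ≤ y 1}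
      = MeasurableEquiv.finTwoArrow ⁻¹' B := by
    ext y
    simp [hB, MeasurableEquiv.finTwoArrow, Set.mem_prod, Prod.le_def]
  have htop : (Measure.pi fun i : Fin 2 => gaussianReal (μ i) 1)
      {y | (y 0) ^ 2 + (y 1) ^ 2 > q₂ ∧ 0 ≤ y 0 ∧ 0 ≤ y 1} = Pμ (A ∩ B) := by
    rw [hset1, hmp.measure_preimage ((hAmeas.inter hBmeas).nullMeasurableSet)]
  have hbot : (Measure.pi fun i : Fin 2 => gaussianReal (μ i) 1)
      {y | 0 ≤ y 0 ∧ 0 ≤ y 1} = Pμ B := by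
    rw [hset2, hmp.measure_preimage hBmeas.nullMeasurableSet]
  -- the total standard Gaussian measure of A is α
  have hGA : G2 A = ENNReal.ofReal α := by
    have hmp0 : MeasurePreserving (MeasurableEquiv.finTwoArrow)
        (Measure.pi fun _ : Fin 2 => Gstd) G2 := measurePreserving_finTwoArrow Gstd
    have hmeasSum : Measurable fun x : Fin 2 → ℝ => ∑ i, (x i) ^ 2 := by fun_prop
    have h1 : chiSq 2 {x | q₂ < x}
        = (Measure.pi fun _ : Fin 2 => Gstd)
            ((fun x : Fin 2 → ℝ => ∑ i, (x i) ^ 2) ⁻¹' {x | q₂ < x}) := by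
      have hIoi : {x : ℝ | q₂ < x} = Set.Ioi q₂ := rfl
      rw [chiSq, hIoi, Measure.map_apply hmeasSum measurableSet_Ioi]
    have h2 : (fun x : Fin 2 → ℝ => ∑ i, (x i) ^ 2) ⁻¹' {x | q₂ < x}
        = MeasurableEquiv.finTwoArrow ⁻¹' A := by
      ext y
      simp [hA, MeasurableEquiv.finTwoArrow, Fin.sum_univ_two]
    rw [h1, h2, hmp0.measure_preimage hAmeas.nullMeasurableSet] at hq₂
    exact hq₂
  have hquad : 4 * G2 (A ∩ B) = ENNReal.ofReal α := by
    have hsets : A ∩ B = {p : ℝ × ℝ | q₂ < p.1 ^ 2 + p.2 ^ 2 ∧ 0 ≤ p.1 ∧ 0 ≤ p.2} := by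
      ext p; simp [hA, hB, Set.mem_prod, and_assoc, Prod.le_def]
    rw [hsets, quad q₂, ← hGA]
  -- the FKG/Chebyshev inequality
  set ν : Measure ℝ := Gstd.restrict (Set.Ici 0) with hν
  set Atld : Set (ℝ × ℝ) := {p | q₂ < max p.1 0 ^ 2 + max p.2 0 ^ 2} with hAtld
  have hAtldMeas : MeasurableSet Atld :=
    measurableSet_lt measurable_const
      (((measurable_fst.max measurable_const).pow_const 2).add
        ((measurable_snd.max measurable_const).pow_const 2))
  set F : ℝ × ℝ → ℝ≥0∞ := Atld.indicator 1 with hF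
  have hFmono : Monotone F := by
    intro p r hpr
    by_cases hp : p ∈ Atld
    · have hr : r ∈ Atld := by
        simp only [hAtld, Set.mem_setOf_eq] at hp ⊢
        have h1 : max p.1 0 ≤ max r.1 0 := max_le_max hpr.1 le_rfl
        have h2 : max p.2 0 ≤ max r.2 0 := max_le_max hpr.2 le_rfl
        have h1' : max p.1 0 ^ 2 ≤ max r.1 0 ^ 2 :=
          pow_le_pow_left₀ (le_max_right _ _) h1 2
        have h2' : max p.2 0 ^ 2 ≤ max r.2 0 ^ 2 :=
          pow_le_pow_left₀ (le_max_right _ _) h2 2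
        linarith
      simp [hF, Set.indicator_of_mem, hp, hr]
    · simp only [hF, Set.indicator_of_notMem hp]
      exact zero_le
  have hFmeas : Measurable F := measurable_const.indicator hAtldMeas
  have key := cheb_two ν ν F (wD (μ 0)) (wD (μ 1)) hFmono hFmeas
    (wD_anti (hμ 0)) (wD_meas (μ 0)) (wD_anti (hμ 1)) (wD_meas (μ 1))
  -- identify the four quantities in `key`
  have hprodres : ν.prod ν = G2.restrict B := by
    rw [hν, hG2, hB, Measure.prod_restrict]
  have hFcong : ∀ p ∈ B, F p = A.indicator (1 : ℝ × ℝ → ℝ≥0∞) p := by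
    rintro ⟨x, y⟩ ⟨hx, hy⟩
    simp only [Set.mem_Ici] at hx hy
    have h1 : max x 0 = x := max_eq_left hx
    have h2 : max y 0 = y := max_eq_left hy
    simp only [hF, hAtld, hA, Set.indicator_apply, Set.mem_setOf_eq, h1, h2]
  have hFWcong : ∀ p ∈ B, F p * (wD (μ 0) p.1 * wD (μ 1) p.2)
      = A.indicator (fun p : ℝ × ℝ => wD (μ 0) p.1 * wD (μ 1) p.2) p := by
    intro p hp
    rw [hFcong p hp]
    by_cases hpA : p ∈ A
    · simp [Set.indicator_of_mem hpA]
    · simp [Set.indicator_of_notMem hpA]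
  have eq1 : ∫⁻ p, F p ∂(ν.prod ν) = G2 (A ∩ B) := by
    rw [hprodres]
    calc ∫⁻ p in B, F p ∂G2
        = ∫⁻ p in B, A.indicator (1 : ℝ × ℝ → ℝ≥0∞) p ∂G2 :=
          setLIntegral_congr_fun hBmeas hFcong
      _ = (G2.restrict B) A := lintegral_indicator_one hAmeas
      _ = G2 (A ∩ B) := Measure.restrict_apply hAmeas
  have eq2 : ∫⁻ p, F p * (wD (μ 0) p.1 * wD (μ 1) p.2) ∂(ν.prod ν) = Pμ (A ∩ B) := by
    rw [hprodres]
    calc ∫⁻ p in B, F p * (wD (μ 0) p.1 * wD (μ 1) p.2) ∂G2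
        = ∫⁻ p in B, A.indicator (fun p : ℝ × ℝ => wD (μ 0) p.1 * wD (μ 1) p.2) p ∂G2 :=
          setLIntegral_congr_fun hBmeas hFWcong
      _ = ∫⁻ p in A, (fun p : ℝ × ℝ => wD (μ 0) p.1 * wD (μ 1) p.2) p ∂(G2.restrict B) :=
          lintegral_indicator hAmeas _
      _ = ∫⁻ p in A ∩ B, wD (μ 0) p.1 * wD (μ 1) p.2 ∂G2 := by
          rw [Measure.restrict_restrict hAmeas]
      _ = Pμ (A ∩ B) := by
          rw [hPμ, prodD, withDensity_apply _ (hAmeas.inter hBmeas)]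
  have eq3 : (∫⁻ x, wD (μ 0) x ∂ν) * ∫⁻ y, wD (μ 1) y ∂ν = Pμ B := by
    have h0 : ∀ m : ℝ, ∫⁻ x, wD m x ∂ν = (gaussianReal m 1) (Set.Ici 0) := by
      intro m
      rw [hν, gauss_wd m, withDensity_apply _ measurableSet_Ici]
    rw [h0, h0, hPμ, hB, Measure.prod_prod]
  have equniv : ν Set.univ = 1 / 2 := by
    rw [hν, Measure.restrict_apply_univ, Gstd_Ici]
  rw [eq2, eq1, eq3, equniv] at key
  -- conclude
  have h4 : Pμ (A ∩ B) ≤ ENNReal.ofReal α * Pμ B := by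
    have hmul := mul_le_mul_right key (4 : ℝ≥0∞)
    have hhalf : ((1 : ℝ≥0∞) / 2) * (1 / 2) = 4⁻¹ := by
      rw [one_div, ← ENNReal.mul_inv (by norm_num) (by norm_num)]
      norm_num
    have hid : ∀ x : ℝ≥0∞, 4 * (x * ((1 / 2) * (1 / 2))) = x := by
      intro x
      rw [hhalf, mul_comm (4 : ℝ≥0∞), mul_assoc,
        ENNReal.inv_mul_cancel (by norm_num) (by norm_num), mul_one]
    calc Pμ (A ∩ B) = 4 * (Pμ (A ∩ B) * ((1 / 2) * (1 / 2))) := (hid _).symm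
      _ ≤ 4 * (G2 (A ∩ B) * Pμ B) := hmul
      _ = (4 * G2 (A ∩ B)) * Pμ B := by ring
      _ = ENNReal.ofReal α * Pμ B := by rw [hquad]
  rw [htop, hbot]
  exact ENNReal.div_le_of_le_mul h4
end

section
/- Let Y ~ N(μ, I₂) with μ₁ ≤ 0 and μ₂ ≤ 0, and α ∈ (0,1). Define LR = Y₁²·1{Y₁≥0} + Y₂²·1{Y₂≥0} and the random critical value q(Y,α) equal to 0 if Y₁≤0,Y₂≤0; to q₁ (the (1-α)-quantile of χ²(1)) if exactly one coordinate is positive; and to q₂ (the (1-α)-quantile of χ²(2)) if both are positive. Then P(LR > q(Y,α)) ≤ (3/4)α. -/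
open MeasureTheory ProbabilityTheory

/-- The adaptive critical value for the two-dimensional orthant test. -/
noncomputable def critValue (q₁ q₂ : ℝ) (y : Fin 2 → ℝ) : ℝ :=
  if y 0 ≤ 0 ∧ y 1 ≤ 0 then 0
  else if (0 ≤ y 0 ∧ y 1 ≤ 0) ∨ (y 0 ≤ 0 ∧ 0 ≤ y 1) then q₁
  else q₂

section Stmt7Aux
open Set Real
open scoped ENNReal NNReal

lemma map_neg_std : Measure.map (fun z : ℝ => -z) (gaussianReal 0 1) = gaussianReal 0 1 := by
  have h := gaussianReal_map_const_mul (μ := 0) (v := 1) (-1)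
  have hv : (⟨(-1 : ℝ)^2, sq_nonneg _⟩ : NNReal) = 1 := by ext; norm_num
  simp only [neg_one_mul, mul_zero, hv, one_mul] at h
  rw [mul_one] at h; exact h.trans (congrArg (gaussianReal 0) hv)

lemma std_Iio_neg (t : ℝ) : gaussianReal 0 1 (Iio (-t)) = gaussianReal 0 1 (Ioi t) := by
  conv_lhs => rw [← map_neg_std]
  rw [Measure.map_apply measurable_neg measurableSet_Iio]
  congr 1
  ext z
  simp

lemma std_singleton (x : ℝ) : gaussianReal 0 1 {x} = 0 :=
  gaussianReal_absolutelyContinuous 0 one_ne_zero (measure_singleton x)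

lemma std_Ioi_zero : gaussianReal 0 1 (Ioi (0:ℝ)) = 1/2 := by
  have h1 : gaussianReal 0 1 (Iic (0:ℝ)) + gaussianReal 0 1 (Ioi (0:ℝ)) = 1 := by
    rw [← measure_union (Iic_disjoint_Ioi le_rfl) measurableSet_Ioi, Iic_union_Ioi,
      measure_univ]
  have h2 : gaussianReal 0 1 (Iic (0:ℝ)) = gaussianReal 0 1 (Ioi (0:ℝ)) := by
    have : Iic (0:ℝ) = Iio 0 ∪ {0} := by
      ext z; simp [le_iff_lt_or_eq]
    rw [this, measure_union (by simp) (measurableSet_singleton _), std_singleton,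
      add_zero]
    simpa using std_Iio_neg 0
  rw [h2, ← two_mul] at h1
  rw [ENNReal.eq_div_iff two_ne_zero ENNReal.ofNat_ne_top]
  exact h1

lemma pdf_mul_le {m u v : ℝ} (hm : m ≤ 0) (hv : 0 ≤ v) (huv : v ≤ u) :
    gaussianPDFReal m 1 u * gaussianPDFReal 0 1 v
      ≤ gaussianPDFReal 0 1 u * gaussianPDFReal m 1 v := by
  simp only [gaussianPDFReal, NNReal.coe_one, mul_one, sub_zero]
  rw [mul_mul_mul_comm, ← Real.exp_add, mul_mul_mul_comm, ← Real.exp_add]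
  refine mul_le_mul_of_nonneg_left (Real.exp_le_exp.2 ?_) (by positivity)
  have : 0 ≤ (-m) * (u - v) := mul_nonneg (by linarith) (by linarith)
  nlinarith [this]

lemma mlr {m : ℝ} (hm : m ≤ 0) {t : ℝ} (ht : 0 ≤ t) :
    gaussianReal m 1 (Ioi t) * gaussianReal 0 1 (Ioi 0)
      ≤ gaussianReal 0 1 (Ioi t) * gaussianReal m 1 (Ioi 0) := by
  rw [gaussianReal_apply_eq_integral m one_ne_zero, gaussianReal_apply_eq_integral m one_ne_zero,
    gaussianReal_apply_eq_integral 0 one_ne_zero, gaussianReal_apply_eq_integral 0 one_ne_zero,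
    ← ENNReal.ofReal_mul (integral_nonneg fun x => gaussianPDFReal_nonneg _ _ _),
    ← ENNReal.ofReal_mul (integral_nonneg fun x => gaussianPDFReal_nonneg _ _ _)]
  apply ENNReal.ofReal_le_ofReal
  have hIm : Integrable (gaussianPDFReal m 1) := integrable_gaussianPDFReal m 1
  have hI0 : Integrable (gaussianPDFReal 0 1) := integrable_gaussianPDFReal 0 1
  have hsplit : ∀ g : ℝ → ℝ, Integrable g →
      ∫ x in Ioi (0:ℝ), g x = (∫ x in Ioc 0 t, g x) + ∫ x in Ioi t, g x := by
    intro g hg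
    rw [← setIntegral_union Ioc_disjoint_Ioi_same measurableSet_Ioi hg.integrableOn
      hg.integrableOn, Ioc_union_Ioi_eq_Ioi ht]
  rw [hsplit _ hIm, hsplit _ hI0]
  have core : (∫ u in Ioi t, gaussianPDFReal m 1 u) * (∫ v in Ioc 0 t, gaussianPDFReal 0 1 v)
      ≤ (∫ u in Ioi t, gaussianPDFReal 0 1 u) * (∫ v in Ioc 0 t, gaussianPDFReal m 1 v) := by
    rw [← integral_mul_const, ← integral_mul_const]
    refine setIntegral_mono_on (hIm.integrableOn.mul_const _) (hI0.integrableOn.mul_const _)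
      measurableSet_Ioi ?_
    intro u hu
    rw [← integral_const_mul, ← integral_const_mul]
    refine setIntegral_mono_on (hI0.integrableOn.const_mul _) (hIm.integrableOn.const_mul _)
      measurableSet_Ioc ?_
    intro v hv
    exact pdf_mul_le hm hv.1.le (le_trans hv.2 (le_of_lt hu))
  have n1 : 0 ≤ ∫ u in Ioi t, gaussianPDFReal m 1 u :=
    integral_nonneg fun x => gaussianPDFReal_nonneg _ _ _
  have n2 : 0 ≤ ∫ u in Ioi t, gaussianPDFReal 0 1 u :=
    integral_nonneg fun x => gaussianPDFReal_nonneg _ _ _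
  have n3 : 0 ≤ ∫ v in Ioc 0 t, gaussianPDFReal 0 1 v :=
    integral_nonneg fun x => gaussianPDFReal_nonneg _ _ _
  have n4 : 0 ≤ ∫ v in Ioc 0 t, gaussianPDFReal m 1 v :=
    integral_nonneg fun x => gaussianPDFReal_nonneg _ _ _
  nlinarith [core]

lemma chiSq_one_eq : chiSq 1 = Measure.map (fun z : ℝ => z ^ 2) (gaussianReal 0 1) := by
  conv_rhs => rw [← (measurePreserving_funUnique (gaussianReal 0 1) (Fin 1)).map_eq]
  rw [Measure.map_map (by fun_prop) (MeasurableEquiv.measurable _), chiSq]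
  congr 1
  funext x
  simp [MeasurableEquiv.funUnique, Fin.sum_univ_one]

lemma tail_one {q₁ α : ℝ} (hα : α ∈ Set.Ioo (0:ℝ) 1)
    (hq₁ : chiSq 1 {x | q₁ < x} = ENNReal.ofReal α) :
    0 ≤ q₁ ∧ ENNReal.ofReal α = 2 * gaussianReal 0 1 (Ioi (Real.sqrt q₁)) := by
  have h1 : gaussianReal 0 1 {z : ℝ | q₁ < z ^ 2} = ENNReal.ofReal α := by
    rw [← hq₁, chiSq_one_eq, Measure.map_apply (by fun_prop)
      (show MeasurableSet {x : ℝ | q₁ < x} from measurableSet_Ioi)]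
    rfl
  have hq₁0 : 0 ≤ q₁ := by
    by_contra hneg
    push_neg at hneg
    have : {z : ℝ | q₁ < z ^ 2} = univ := by
      ext z; simp only [mem_setOf_eq, mem_univ, iff_true]; nlinarith [sq_nonneg z]
    rw [this, measure_univ] at h1
    have := ENNReal.ofReal_lt_one.2 hα.2
    rw [← h1] at this
    exact lt_irrefl _ this
  refine ⟨hq₁0, ?_⟩
  set t := Real.sqrt q₁ with htdef
  have ht0 : 0 ≤ t := Real.sqrt_nonneg _
  have ht2 : t ^ 2 = q₁ := Real.sq_sqrt hq₁0
  have hset : {z : ℝ | q₁ < z ^ 2} = Iio (-t) ∪ Ioi t := by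
    ext z
    simp only [mem_setOf_eq, mem_union, mem_Iio, mem_Ioi]
    constructor
    · intro hz
      by_contra hc
      push_neg at hc
      nlinarith [hc.1, hc.2]
    · rintro (hz | hz) <;> nlinarith
  rw [hset, measure_union (by
    refine Set.disjoint_left.2 fun z hz hz' => ?_
    simp only [mem_Iio] at hz
    simp only [mem_Ioi] at hz'
    linarith) measurableSet_Ioi, std_Iio_neg, ← two_mul] at h1
  exact h1.symm

lemma quadrant {q₂ α : ℝ} (hq₂ : chiSq 2 {x | q₂ < x} = ENNReal.ofReal α) :
    4 * (Measure.pi fun _ : Fin 2 => gaussianReal 0 1)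
        {z : Fin 2 → ℝ | 0 < z 0 ∧ 0 < z 1 ∧ q₂ < (z 0)^2 + (z 1)^2} ≤ ENNReal.ofReal α := by
  set P := Measure.pi fun _ : Fin 2 => gaussianReal 0 1 with hP
  have hF : P {z : Fin 2 → ℝ | q₂ < (z 0)^2 + (z 1)^2} = ENNReal.ofReal α := by
    rw [← hq₂, chiSq, Measure.map_apply (by fun_prop)
      (show MeasurableSet {x : ℝ | q₂ < x} from measurableSet_Ioi)]
    congr 1
    ext z
    simp [Fin.sum_univ_two]
  set Q : ℝ → ℝ → Set (Fin 2 → ℝ) :=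
    fun s₀ s₁ => {z | 0 < s₀ * z 0 ∧ 0 < s₁ * z 1 ∧ q₂ < (z 0)^2 + (z 1)^2} with hQdef
  have m0 : Measurable fun z : Fin 2 → ℝ => z 0 := measurable_pi_apply 0
  have m1 : Measurable fun z : Fin 2 → ℝ => z 1 := measurable_pi_apply 1
  have hQmeas : ∀ s₀ s₁ : ℝ, MeasurableSet (Q s₀ s₁) := by
    intro s₀ s₁
    exact ((m0.const_mul s₀) measurableSet_Ioi).inter (((m1.const_mul s₁) measurableSet_Ioi).inter
      (((m0.pow_const 2).add (m1.pow_const 2)) measurableSet_Ioi))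
  have hpres : ∀ s₀ s₁ : ℝ, s₀^2 = 1 → s₁^2 = 1 → P (Q s₀ s₁) = P (Q 1 1) := by
    intro s₀ s₁ h₀ h₁
    have hmp : MeasurePreserving (fun z (i : Fin 2) => ![s₀,s₁] i * z i) P P := by
      refine measurePreserving_pi _ _ fun i => ⟨measurable_const_mul _, ?_⟩
      have h := gaussianReal_map_const_mul (μ := 0) (v := 1) (![s₀,s₁] i)
      have hv : (⟨(![s₀,s₁] i)^2, sq_nonneg _⟩ : NNReal) = 1 := by
        ext
        fin_cases i <;>
          simp only [Matrix.cons_val_zero, Matrix.cons_val_one, Matrix.head_cons,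
            NNReal.coe_mk, NNReal.coe_one]
        · exact h₀
        · exact h₁
      rw [mul_zero, mul_one] at h
      exact h.trans (congrArg (gaussianReal 0) hv)
    have hpre : (fun z (i : Fin 2) => ![s₀,s₁] i * z i) ⁻¹' (Q 1 1) = Q s₀ s₁ := by
      ext z
      simp [hQdef, mul_pow, h₀, h₁]
    rw [← hpre, hmp.measure_preimage (hQmeas 1 1).nullMeasurableSet]
  have hsub : Q 1 1 ∪ Q 1 (-1) ∪ Q (-1) 1 ∪ Q (-1) (-1)
      ⊆ {z : Fin 2 → ℝ | q₂ < (z 0)^2 + (z 1)^2} := by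
    rintro z (((hz | hz) | hz) | hz) <;> exact hz.2.2
  have hd1 : Disjoint (Q 1 1) (Q 1 (-1)) := by
    refine Set.disjoint_left.2 fun z hz hz' => ?_
    simp only [hQdef, mem_setOf_eq, one_mul, neg_one_mul] at hz hz'
    linarith [hz.2.1, hz'.2.1]
  have hd2 : Disjoint (Q 1 1 ∪ Q 1 (-1)) (Q (-1) 1) := by
    refine Set.disjoint_left.2 fun z hz hz' => ?_
    simp only [hQdef, mem_union, mem_setOf_eq, one_mul, neg_one_mul] at hz hz'
    rcases hz with hz | hz <;> linarith [hz.1, hz'.1]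
  have hd3 : Disjoint (Q 1 1 ∪ Q 1 (-1) ∪ Q (-1) 1) (Q (-1) (-1)) := by
    refine Set.disjoint_left.2 fun z hz hz' => ?_
    simp only [hQdef, mem_union, mem_setOf_eq, one_mul, neg_one_mul] at hz hz'
    rcases hz with (hz | hz) | hz <;> linarith [hz.1, hz'.1]
  have hunion : P (Q 1 1 ∪ Q 1 (-1) ∪ Q (-1) 1 ∪ Q (-1) (-1))
      = P (Q 1 1) + P (Q 1 (-1)) + P (Q (-1) 1) + P (Q (-1) (-1)) := by
    rw [measure_union hd3 (hQmeas _ _), measure_union hd2 (hQmeas _ _),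
      measure_union hd1 (hQmeas _ _)]
  have hQ11 : {z : Fin 2 → ℝ | 0 < z 0 ∧ 0 < z 1 ∧ q₂ < (z 0)^2 + (z 1)^2} = Q 1 1 := by
    ext z; simp [hQdef]
  rw [hQ11]
  calc 4 * P (Q 1 1)
      = P (Q 1 1) + P (Q 1 (-1)) + P (Q (-1) 1) + P (Q (-1) (-1)) := by
        rw [hpres 1 (-1) (by norm_num) (by norm_num),
          hpres (-1) 1 (by norm_num) (by norm_num),
          hpres (-1) (-1) (by norm_num) (by norm_num)]
        ring
    _ = P (Q 1 1 ∪ Q 1 (-1) ∪ Q (-1) 1 ∪ Q (-1) (-1)) := hunion.symm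
    _ ≤ P {z : Fin 2 → ℝ | q₂ < (z 0)^2 + (z 1)^2} := measure_mono hsub
    _ = ENNReal.ofReal α := hF

lemma half_bound {a₀ a₁ b₀ b₁ : ℝ≥0∞} (h₀ : a₀ + b₀ = 1) (h₁ : a₁ + b₁ = 1)
    (hb₀ : b₀ ≤ 1/2) (hb₁ : b₁ ≤ 1/2) :
    b₀ * a₁ + a₀ * b₁ ≤ ENNReal.ofReal (1/2) := by
  have hfin : ∀ {x y : ℝ≥0∞}, x + y = 1 → x ≠ ⊤ ∧ y ≠ ⊤ := by
    intro x y h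
    constructor <;> refine ne_top_of_le_ne_top ENNReal.one_ne_top ?_
    · exact h ▸ self_le_add_right x y
    · exact h ▸ self_le_add_left y x
  obtain ⟨ha₀, hbb₀⟩ := hfin h₀
  obtain ⟨ha₁, hbb₁⟩ := hfin h₁
  have htr : ∀ {x y : ℝ≥0∞}, x ≠ ⊤ → y ≠ ⊤ → x + y = 1 → x.toReal + y.toReal = 1 := by
    intro x y hx hy h
    have := congrArg ENNReal.toReal h
    rwa [ENNReal.toReal_add hx hy, ENNReal.toReal_one] at this
  have hs₀ := htr ha₀ hbb₀ h₀
  have hs₁ := htr ha₁ hbb₁ h₁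
  have hhalf : ((1:ℝ≥0∞)/2).toReal = 1/2 := by
    rw [ENNReal.toReal_div, ENNReal.toReal_one]; norm_num
  have hB₀ : b₀.toReal ≤ 1/2 := by
    have := ENNReal.toReal_mono (by simp : (1:ℝ≥0∞)/2 ≠ ⊤) hb₀
    rwa [hhalf] at this
  have hB₁ : b₁.toReal ≤ 1/2 := by
    have := ENNReal.toReal_mono (by simp : (1:ℝ≥0∞)/2 ≠ ⊤) hb₁
    rwa [hhalf] at this
  rw [← ENNReal.ofReal_toReal ha₀, ← ENNReal.ofReal_toReal ha₁,
    ← ENNReal.ofReal_toReal hbb₀, ← ENNReal.ofReal_toReal hbb₁,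
    ← ENNReal.ofReal_mul ENNReal.toReal_nonneg, ← ENNReal.ofReal_mul ENNReal.toReal_nonneg,
    ← ENNReal.ofReal_add (by positivity) (by positivity)]
  apply ENNReal.ofReal_le_ofReal
  nlinarith [ENNReal.toReal_nonneg (a := a₀), ENNReal.toReal_nonneg (a := a₁),
    ENNReal.toReal_nonneg (a := b₀), ENNReal.toReal_nonneg (a := b₁),
    mul_nonneg (by linarith : (0:ℝ) ≤ 1 - 2*b₀.toReal) (by linarith : (0:ℝ) ≤ 1 - 2*b₁.toReal)]

end Stmt7Aux

open Set Real in
open scoped ENNReal NNReal in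
/-- the adaptive-critical-value test for H₁ : μ ≤ 0 in dimension 2
has level at most (3/4)α. -/
theorem stmt7 (μ : Fin 2 → ℝ) (hμ : ∀ i, μ i ≤ 0) (α : ℝ) (hα : α ∈ Set.Ioo (0:ℝ) 1)
    (q₁ q₂ : ℝ)
    (hq₁ : chiSq 1 {x | q₁ < x} = ENNReal.ofReal α)
    (hq₂ : chiSq 2 {x | q₂ < x} = ENNReal.ofReal α) :
    (Measure.pi fun i : Fin 2 => gaussianReal (μ i) 1)
      {y | (if 0 ≤ y 0 then (y 0) ^ 2 else 0) + (if 0 ≤ y 1 then (y 1) ^ 2 else 0)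
            > critValue q₁ q₂ y} ≤
    ENNReal.ofReal (3 / 4 * α) := by
  obtain ⟨hq₁0, hA⟩ := tail_one hα hq₁
  set t := Real.sqrt q₁ with htdef
  have ht0 : 0 ≤ t := Real.sqrt_nonneg _
  have ht2 : t ^ 2 = q₁ := Real.sq_sqrt hq₁0
  set Pμ := Measure.pi fun i : Fin 2 => gaussianReal (μ i) 1 with hPμ
  set E₁ : Set (Fin 2 → ℝ) := {y | t < y 0 ∧ y 1 ≤ 0} with hE₁def
  set E₂ : Set (Fin 2 → ℝ) := {y | y 0 ≤ 0 ∧ t < y 1} with hE₂def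
  set E₃ : Set (Fin 2 → ℝ) := {y | 0 < y 0 ∧ 0 < y 1 ∧ q₂ < (y 0)^2 + (y 1)^2} with hE₃def
  have hsub : {y : Fin 2 → ℝ | (if 0 ≤ y 0 then (y 0) ^ 2 else 0)
      + (if 0 ≤ y 1 then (y 1) ^ 2 else 0) > critValue q₁ q₂ y} ⊆ E₁ ∪ E₂ ∪ E₃ := by
    intro y hy
    simp only [mem_setOf_eq, critValue] at hy
    have e0 : y 0 ≤ 0 → (if 0 ≤ y 0 then (y 0) ^ 2 else 0) = 0 := by
      intro h; split_ifs with h'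
      · rw [le_antisymm h h']; ring
      · rfl
    have e1 : y 1 ≤ 0 → (if 0 ≤ y 1 then (y 1) ^ 2 else 0) = 0 := by
      intro h; split_ifs with h'
      · rw [le_antisymm h h']; ring
      · rfl
    have sq_gt : ∀ z : ℝ, 0 < z → q₁ < z ^ 2 → t < z := by
      intro z hz hq
      by_contra hc
      push_neg at hc
      nlinarith
    rcases le_or_gt (y 0) 0 with h0 | h0 <;> rcases le_or_gt (y 1) 0 with h1 | h1
    · have c : (if y 0 ≤ 0 ∧ y 1 ≤ 0 then (0:ℝ)
          else if (0 ≤ y 0 ∧ y 1 ≤ 0) ∨ (y 0 ≤ 0 ∧ 0 ≤ y 1) then q₁ else q₂) = 0 :=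
        if_pos ⟨h0, h1⟩
      rw [e0 h0, e1 h1, c] at hy
      norm_num at hy
    · have c : (if y 0 ≤ 0 ∧ y 1 ≤ 0 then (0:ℝ)
          else if (0 ≤ y 0 ∧ y 1 ≤ 0) ∨ (y 0 ≤ 0 ∧ 0 ≤ y 1) then q₁ else q₂) = q₁ := by
        rw [if_neg (fun h => absurd h.2 (not_le.2 h1)), if_pos (Or.inr ⟨h0, h1.le⟩)]
      rw [e0 h0, c, if_pos h1.le, zero_add] at hy
      exact Or.inl (Or.inr ⟨h0, sq_gt _ h1 hy⟩)
    · have c : (if y 0 ≤ 0 ∧ y 1 ≤ 0 then (0:ℝ)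
          else if (0 ≤ y 0 ∧ y 1 ≤ 0) ∨ (y 0 ≤ 0 ∧ 0 ≤ y 1) then q₁ else q₂) = q₁ := by
        rw [if_neg (fun h => absurd h.1 (not_le.2 h0)), if_pos (Or.inl ⟨h0.le, h1⟩)]
      rw [e1 h1, c, if_pos h0.le, add_zero] at hy
      exact Or.inl (Or.inl ⟨sq_gt _ h0 hy, h1⟩)
    · have c : (if y 0 ≤ 0 ∧ y 1 ≤ 0 then (0:ℝ)
          else if (0 ≤ y 0 ∧ y 1 ≤ 0) ∨ (y 0 ≤ 0 ∧ 0 ≤ y 1) then q₁ else q₂) = q₂ := by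
        rw [if_neg (fun h => absurd h.1 (not_le.2 h0)),
          if_neg (show ¬((0 ≤ y 0 ∧ y 1 ≤ 0) ∨ (y 0 ≤ 0 ∧ 0 ≤ y 1)) from fun h =>
            h.elim (fun hh => absurd hh.2 (not_le.2 h1)) (fun hh => absurd hh.1 (not_le.2 h0)))]
      rw [c, if_pos h0.le, if_pos h1.le] at hy
      exact Or.inr ⟨h0, h1, hy⟩
  have hE₁m : Pμ E₁ = gaussianReal (μ 0) 1 (Ioi t) * gaussianReal (μ 1) 1 (Iic 0) := by
    have h : E₁ = Set.pi univ ![Ioi t, Iic 0] := by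
      ext y
      simp [hE₁def, Fin.forall_fin_two]
    rw [hPμ, h, Measure.pi_pi]
    simp [Fin.prod_univ_two]
  have hE₂m : Pμ E₂ = gaussianReal (μ 0) 1 (Iic 0) * gaussianReal (μ 1) 1 (Ioi t) := by
    have h : E₂ = Set.pi univ ![Iic 0, Ioi t] := by
      ext y
      simp [hE₂def, Fin.forall_fin_two]
    rw [hPμ, h, Measure.pi_pi]
    simp [Fin.prod_univ_two]
  have hshift : MeasurePreserving (fun (z : Fin 2 → ℝ) (i : Fin 2) => z i + μ i)
      (Measure.pi fun _ : Fin 2 => gaussianReal 0 1) Pμ := by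
    refine measurePreserving_pi _ _ fun i => ⟨measurable_add_const _, ?_⟩
    rw [show (fun x : ℝ => x + μ i) = (· + μ i) from rfl, gaussianReal_map_add_const, zero_add]
  have m0 : Measurable fun z : Fin 2 → ℝ => z 0 := measurable_pi_apply 0
  have m1 : Measurable fun z : Fin 2 → ℝ => z 1 := measurable_pi_apply 1
  have hE₃meas : MeasurableSet E₃ :=
    (m0 measurableSet_Ioi).inter ((m1 measurableSet_Ioi).inter
      (((m0.pow_const 2).add (m1.pow_const 2)) measurableSet_Ioi))
  have hE₃m : Pμ E₃ ≤ (Measure.pi fun _ : Fin 2 => gaussianReal 0 1) E₃ := by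
    rw [← hshift.map_eq, Measure.map_apply hshift.measurable hE₃meas]
    refine measure_mono fun z hz => ?_
    simp only [hE₃def, mem_preimage, mem_setOf_eq] at hz ⊢
    obtain ⟨h1, h2, h3⟩ := hz
    have hμ0 := hμ 0
    have hμ1 := hμ 1
    refine ⟨by linarith, by linarith, by nlinarith⟩
  have h4x : 4 * (Measure.pi fun _ : Fin 2 => gaussianReal 0 1) E₃ ≤ ENNReal.ofReal α := by
    rw [hE₃def]
    exact quadrant hq₂
  have hcoord : ∀ i : Fin 2,
      gaussianReal (μ i) 1 (Iic 0) + gaussianReal (μ i) 1 (Ioi 0) = 1 ∧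
      gaussianReal (μ i) 1 (Ioi 0) ≤ 1/2 ∧
      gaussianReal (μ i) 1 (Ioi t) ≤ ENNReal.ofReal α * gaussianReal (μ i) 1 (Ioi 0) := by
    intro i
    refine ⟨?_, ?_, ?_⟩
    · rw [← measure_union (Iic_disjoint_Ioi le_rfl) measurableSet_Ioi, Iic_union_Ioi,
        measure_univ]
    · have hmapi : gaussianReal (μ i) 1 = Measure.map (· + μ i) (gaussianReal 0 1) := by
        rw [gaussianReal_map_add_const, zero_add]
      rw [hmapi, Measure.map_apply (measurable_add_const _) measurableSet_Ioi]
      have h : (· + μ i) ⁻¹' Ioi 0 = Ioi (-μ i) := by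
        ext z; simp only [mem_preimage, mem_Ioi]; constructor <;> intro <;> linarith
      rw [h, ← std_Ioi_zero]
      exact measure_mono (Ioi_subset_Ioi (by linarith [hμ i]))
    · have hmlr := mlr (hμ i) ht0
      rw [std_Ioi_zero] at hmlr
      have h2 := mul_le_mul_left hmlr 2
      have hc : (1/2 : ℝ≥0∞) * 2 = 1 := by
        rw [one_div, ENNReal.inv_mul_cancel two_ne_zero ENNReal.ofNat_ne_top]
      calc gaussianReal (μ i) 1 (Ioi t)
          = gaussianReal (μ i) 1 (Ioi t) * (1/2) * 2 := by rw [mul_assoc, hc, mul_one]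
        _ ≤ gaussianReal 0 1 (Ioi t) * gaussianReal (μ i) 1 (Ioi 0) * 2 := h2
        _ = (2 * gaussianReal 0 1 (Ioi t)) * gaussianReal (μ i) 1 (Ioi 0) := by ring
        _ = ENNReal.ofReal α * gaussianReal (μ i) 1 (Ioi 0) := by rw [← hA]
  obtain ⟨hab0, hb0, hp0⟩ := hcoord 0
  obtain ⟨hab1, hb1, hp1⟩ := hcoord 1
  have hhalf := half_bound hab0 hab1 hb0 hb1
  have step1 : Pμ {y : Fin 2 → ℝ | (if 0 ≤ y 0 then (y 0) ^ 2 else 0)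
        + (if 0 ≤ y 1 then (y 1) ^ 2 else 0) > critValue q₁ q₂ y}
      ≤ Pμ E₁ + Pμ E₂ + Pμ E₃ :=
    le_trans (measure_mono hsub)
      (le_trans (measure_union_le _ _) (add_le_add_left (measure_union_le _ _) _))
  have step2 : Pμ E₁ + Pμ E₂ ≤ ENNReal.ofReal α * ENNReal.ofReal (1/2) := by
    rw [hE₁m, hE₂m]
    calc gaussianReal (μ 0) 1 (Ioi t) * gaussianReal (μ 1) 1 (Iic 0)
          + gaussianReal (μ 0) 1 (Iic 0) * gaussianReal (μ 1) 1 (Ioi t)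
        ≤ (ENNReal.ofReal α * gaussianReal (μ 0) 1 (Ioi 0)) * gaussianReal (μ 1) 1 (Iic 0)
          + gaussianReal (μ 0) 1 (Iic 0) * (ENNReal.ofReal α * gaussianReal (μ 1) 1 (Ioi 0)) :=
          add_le_add (mul_le_mul_left hp0 _) (mul_le_mul_right hp1 _)
      _ = ENNReal.ofReal α * (gaussianReal (μ 0) 1 (Ioi 0) * gaussianReal (μ 1) 1 (Iic 0)
          + gaussianReal (μ 0) 1 (Iic 0) * gaussianReal (μ 1) 1 (Ioi 0)) := by ring
      _ ≤ ENNReal.ofReal α * ENNReal.ofReal (1/2) := mul_le_mul_right hhalf _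
  have step3 : Pμ E₃ ≤ ENNReal.ofReal α / 4 := by
    refine le_trans hE₃m ?_
    rw [ENNReal.le_div_iff_mul_le (by norm_num) (by norm_num), mul_comm]
    exact h4x
  have hfinal : ENNReal.ofReal α * ENNReal.ofReal (1/2) + ENNReal.ofReal α / 4
      = ENNReal.ofReal (3/4 * α) := by
    rw [← ENNReal.ofReal_mul hα.1.le,
      show ENNReal.ofReal α / 4 = ENNReal.ofReal (α/4) by
        rw [ENNReal.ofReal_div_of_pos (by norm_num : (0:ℝ) < 4), ENNReal.ofReal_ofNat],
      ← ENNReal.ofReal_add (mul_nonneg hα.1.le (by norm_num)) (by linarith [hα.1])]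
    congr 1
    ring
  calc Pμ {y : Fin 2 → ℝ | (if 0 ≤ y 0 then (y 0) ^ 2 else 0)
        + (if 0 ≤ y 1 then (y 1) ^ 2 else 0) > critValue q₁ q₂ y}
      ≤ Pμ E₁ + Pμ E₂ + Pμ E₃ := step1
    _ ≤ ENNReal.ofReal α * ENNReal.ofReal (1/2) + ENNReal.ofReal α / 4 :=
        add_le_add step2 step3
    _ = ENNReal.ofReal (3/4 * α) := hfinal
end

section
/- Let C = {μ ∈ ℝᵖ : Aμ ≥ 0} be a polyhedral cone and C° = {y : yᵀμ ≤ 0 for all μ ∈ C} its polar cone. Let F be a face of C° with spanning linear subspace L and orthogonal projection P onto L. Then for every μ ∈ C and every y in the relative interior of F, yᵀPμ ≤ 0; i.e., Pμ lies in the polar cone of F. -/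
open MeasureTheory Set

/-- `F` is a face of the convex cone `K`: a convex subcone such that
`x, y ∈ K` with `x + y ∈ F` implies `x, y ∈ F`. -/
def IsFaceOfCone {E : Type*} [NormedAddCommGroup E] [InnerProductSpace ℝ E]
    (K F : Set E) : Prop :=
  F ⊆ K ∧ Convex ℝ F ∧ (∀ t : ℝ, 0 < t → ∀ x ∈ F, t • x ∈ F) ∧
    ∀ x ∈ K, ∀ y ∈ K, x + y ∈ F → x ∈ F ∧ y ∈ F

/-- for a polyhedral cone C with polar C°, a face F of C° with
spanning subspace L and orthogonal projection P onto L, for every μ ∈ C and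
y in the relative interior of F, ⟪y, Pμ⟫ ≤ 0 (i.e. Pμ is in the polar of F). -/
theorem stmt11 (p k : ℕ) (A : Matrix (Fin k) (Fin p) ℝ)
    (C : Set (EuclideanSpace ℝ (Fin p)))
    (hC : C = {x : EuclideanSpace ℝ (Fin p) | ∀ i, 0 ≤ A.mulVec (fun j => x j) i})
    (Cpolar : Set (EuclideanSpace ℝ (Fin p)))
    (hCpolar : Cpolar = {y : EuclideanSpace ℝ (Fin p) | ∀ x ∈ C, inner ℝ y x ≤ (0:ℝ)})
    (F : Set (EuclideanSpace ℝ (Fin p))) (hF : IsFaceOfCone Cpolar F) :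
    ∀ μ ∈ C, ∀ y ∈ intrinsicInterior ℝ F,
      inner ℝ y ((Submodule.orthogonalProjection (Submodule.span ℝ F) μ :
        EuclideanSpace ℝ (Fin p))) ≤ (0:ℝ) := by
  intro μ hμ y hy
  have hyF : y ∈ F := intrinsicInterior_subset hy
  have hyL : y ∈ Submodule.span ℝ F := Submodule.subset_span hyF
  have horth := Submodule.sub_starProjection_mem_orthogonal (K := Submodule.span ℝ F) μ
  have h2 : (inner ℝ y (μ - (Submodule.orthogonalProjection (Submodule.span ℝ F) μ :
      EuclideanSpace ℝ (Fin p))) : ℝ) = 0 :=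
    (Submodule.mem_orthogonal _ _).mp horth y hyL
  have heq : inner ℝ y ((Submodule.orthogonalProjection (Submodule.span ℝ F) μ :
      EuclideanSpace ℝ (Fin p))) = (inner ℝ y μ : ℝ) := by
    rw [inner_sub_right] at h2
    linarith
  rw [heq]
  have hyC : y ∈ Cpolar := hF.1 hyF
  rw [hCpolar] at hyC
  exact hyC μ hμ
end

section
/- Let Y₁,…,Y_p be independent with Yᵢ ~ N(μᵢ, 1) and μᵢ ≤ 0 for all i. Fix a subset I ⊆ {1,…,p} with |I| = k ≥ 1 and let q_k be the (1-α)-quantile of χ²(k). Then P(∑_{i∈I} Yᵢ² > q_k | Yᵢ ≥ 0 for all i ∈ I) ≤ α. -/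
open MeasureTheory ProbabilityTheory

open Real Set

lemma s13_gpdf_ratio (m x : ℝ) :
    gaussianPDFReal m 1 x = Real.exp (m*x - m^2/2) * gaussianPDFReal 0 1 x := by
  simp only [gaussianPDFReal, NNReal.coe_one, mul_one, sub_zero]
  have h : -(x - m)^2/2 = (m*x - m^2/2) + (-x^2/2) := by ring
  rw [h, Real.exp_add]
  ring

lemma s13_pdf_le (m : ℝ) (hm : m ≤ 0) {c x : ℝ} (hcx : c ≤ x) :
    gaussianPDF m 1 x ≤ ENNReal.ofReal (Real.exp (m*c - m^2/2)) * gaussianPDF 0 1 x := by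
  rw [gaussianPDF, gaussianPDF, ← ENNReal.ofReal_mul (Real.exp_nonneg _)]
  apply ENNReal.ofReal_le_ofReal
  rw [s13_gpdf_ratio m x]
  apply mul_le_mul_of_nonneg_right _ (gaussianPDFReal_nonneg _ _ _)
  apply Real.exp_le_exp.mpr
  have : m * x ≤ m * c := mul_le_mul_of_nonpos_left hcx hm
  linarith

lemma s13_le_pdf (m : ℝ) (hm : m ≤ 0) {c x : ℝ} (hxc : x ≤ c) :
    ENNReal.ofReal (Real.exp (m*c - m^2/2)) * gaussianPDF 0 1 x ≤ gaussianPDF m 1 x := by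
  rw [gaussianPDF, gaussianPDF, ← ENNReal.ofReal_mul (Real.exp_nonneg _)]
  apply ENNReal.ofReal_le_ofReal
  rw [s13_gpdf_ratio m x]
  apply mul_le_mul_of_nonneg_right _ (gaussianPDFReal_nonneg _ _ _)
  apply Real.exp_le_exp.mpr
  have : m * c ≤ m * x := mul_le_mul_of_nonpos_left hxc hm
  linarith

lemma s13_cross_Ioi (m : ℝ) (hm : m ≤ 0) (c : ℝ) :
    gaussianReal m 1 (Ioi c) * gaussianReal 0 1 (Icc 0 c)
      ≤ gaussianReal 0 1 (Ioi c) * gaussianReal m 1 (Icc 0 c) := by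
  set K := ENNReal.ofReal (Real.exp (m*c - m^2/2)) with hK
  have hKne : K ≠ ⊤ := ENNReal.ofReal_ne_top
  have h1 : gaussianReal m 1 (Ioi c) ≤ K * gaussianReal 0 1 (Ioi c) := by
    rw [gaussianReal_apply _ one_ne_zero, gaussianReal_apply _ one_ne_zero,
      ← lintegral_const_mul' _ _ hKne]
    exact setLIntegral_mono ((measurable_gaussianPDF 0 1).const_mul K)
      (fun x hx => s13_pdf_le m hm (le_of_lt hx))
  have h2 : K * gaussianReal 0 1 (Icc 0 c) ≤ gaussianReal m 1 (Icc 0 c) := by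
    rw [gaussianReal_apply _ one_ne_zero, gaussianReal_apply _ one_ne_zero,
      ← lintegral_const_mul' _ _ hKne]
    exact setLIntegral_mono (measurable_gaussianPDF m 1)
      (fun x hx => s13_le_pdf m hm hx.2)
  calc gaussianReal m 1 (Ioi c) * gaussianReal 0 1 (Icc 0 c)
      ≤ K * gaussianReal 0 1 (Ioi c) * gaussianReal 0 1 (Icc 0 c) :=
        mul_le_mul_left h1 _
    _ = gaussianReal 0 1 (Ioi c) * (K * gaussianReal 0 1 (Icc 0 c)) := by ring
    _ ≤ gaussianReal 0 1 (Ioi c) * gaussianReal m 1 (Icc 0 c) := mul_le_mul_right h2 _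

lemma s13_cross_interval (m : ℝ) (hm : m ≤ 0) (c : ℝ) :
    gaussianReal m 1 (Ioi c ∩ Ici 0) * gaussianReal 0 1 (Ici 0)
      ≤ gaussianReal 0 1 (Ioi c ∩ Ici 0) * gaussianReal m 1 (Ici 0) := by
  rcases lt_or_ge c 0 with hc | hc
  · have : Ioi c ∩ Ici 0 = Ici 0 := inter_eq_right.mpr (fun x hx => lt_of_lt_of_le hc hx)
    rw [this, mul_comm]
  · have hsub : Ioi c ∩ Ici 0 = Ioi c := inter_eq_left.mpr
      (fun x hx => le_trans hc (le_of_lt hx))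
    have hdecomp : ∀ mm : ℝ, gaussianReal mm 1 (Ici 0)
        = gaussianReal mm 1 (Icc 0 c) + gaussianReal mm 1 (Ioi c) := by
      intro mm
      rw [← measure_union ((Iic_disjoint_Ioi le_rfl).mono Icc_subset_Iic_self le_rfl)
        measurableSet_Ioi, Icc_union_Ioi_eq_Ici hc]
    rw [hsub, hdecomp, hdecomp, mul_add, mul_add]
    exact add_le_add (s13_cross_Ioi m hm c) (le_of_eq (mul_comm _ _))

lemma s13_slice_set (t : ℝ) :
    {x : ℝ | t < x^2 ∧ 0 ≤ x} = Ioi (if t < 0 then -1 else Real.sqrt t) ∩ Ici 0 := by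
  ext x
  simp only [mem_setOf_eq, mem_inter_iff, mem_Ioi, mem_Ici]
  split_ifs with ht
  · constructor
    · rintro ⟨-, hx⟩; exact ⟨by linarith, hx⟩
    · rintro ⟨-, hx⟩; exact ⟨lt_of_lt_of_le ht (sq_nonneg x), hx⟩
  · push_neg at ht
    constructor
    · rintro ⟨h1, hx⟩
      rcases eq_or_lt_of_le hx with h0 | h0
      · exfalso; rw [← h0] at h1; simp at h1; linarith
      · exact ⟨(Real.sqrt_lt' h0).mpr h1, hx⟩
    · rintro ⟨h1, hx⟩
      rcases eq_or_lt_of_le hx with h0 | h0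
      · exfalso; have := Real.sqrt_nonneg t; rw [← h0] at h1; linarith
      · exact ⟨(Real.sqrt_lt' h0).mp h1, hx⟩

lemma s13_slice_meas (t : ℝ) : MeasurableSet {x : ℝ | t < x^2 ∧ 0 ≤ x} := by
  rw [s13_slice_set]; exact measurableSet_Ioi.inter measurableSet_Ici

lemma s13_cross_slice (m : ℝ) (hm : m ≤ 0) (t : ℝ) :
    gaussianReal m 1 {x : ℝ | t < x^2 ∧ 0 ≤ x} * gaussianReal 0 1 (Ici 0)
      ≤ gaussianReal 0 1 {x : ℝ | t < x^2 ∧ 0 ≤ x} * gaussianReal m 1 (Ici 0) := by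
  rw [s13_slice_set]
  exact s13_cross_interval m hm _

lemma s13_Ici_pos (m : ℝ) : 0 < gaussianReal m 1 (Ici 0) := by
  rw [gaussianReal_apply_eq_integral _ one_ne_zero]
  apply ENNReal.ofReal_pos.mpr
  rw [setIntegral_pos_iff_support_of_nonneg_ae]
  · have : (Function.support fun x => gaussianPDFReal m 1 x) = univ := by
      ext x; simp [Function.mem_support, (gaussianPDFReal_pos m 1 x one_ne_zero).ne']
    rw [this, univ_inter]
    simp [Real.volume_Ici]
  · exact Filter.Eventually.of_forall (fun x => gaussianPDFReal_nonneg m 1 x)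
  · exact (integrable_gaussianPDFReal m 1).integrableOn

lemma s13_Ici_ne_top (m : ℝ) : gaussianReal m 1 (Ici 0) ≠ ⊤ := measure_ne_top _ _

noncomputable def s13PM {p : ℕ} (ν : Fin p → ℝ) : Measure (Fin p → ℝ) :=
  Measure.pi fun i => gaussianReal (ν i) 1

instance {p : ℕ} (ν : Fin p → ℝ) : IsProbabilityMeasure (s13PM ν) := by
  unfold s13PM; infer_instance

def s13A {p : ℕ} (I : Finset (Fin p)) (q : ℝ) : Set (Fin p → ℝ) :=
  {y | q < ∑ i ∈ I, (y i)^2}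

def s13B {p : ℕ} (J : Finset (Fin p)) : Set (Fin p → ℝ) := {y | ∀ i ∈ J, 0 ≤ y i}

lemma s13_sum_meas {p : ℕ} (I : Finset (Fin p)) :
    Measurable fun y : Fin p → ℝ => ∑ i ∈ I, (y i)^2 :=
  Finset.measurable_sum _ fun i _ => (measurable_pi_apply i).pow_const 2

lemma s13A_meas {p : ℕ} (I : Finset (Fin p)) (q : ℝ) : MeasurableSet (s13A I q) :=
  measurableSet_lt measurable_const (s13_sum_meas I)

lemma s13B_eq_pi {p : ℕ} (J : Finset (Fin p)) :
    s13B J = Set.pi univ (fun j => if j ∈ J then Ici (0:ℝ) else univ) := by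
  ext y
  simp only [s13B, mem_setOf_eq, mem_pi, mem_univ, forall_true_left]
  constructor
  · intro h j; split_ifs with hj
    · exact h j hj
    · trivial
  · intro h j hj; have := h j; rw [if_pos hj] at this; exact this

lemma s13B_meas {p : ℕ} (J : Finset (Fin p)) : MeasurableSet (s13B J) := by
  rw [s13B_eq_pi]
  exact MeasurableSet.univ_pi fun j => by split_ifs <;> simp [measurableSet_Ici]

lemma s13B_measure {p : ℕ} (ν : Fin p → ℝ) (J : Finset (Fin p)) :
    s13PM ν (s13B J) = ∏ j ∈ J, gaussianReal (ν j) 1 (Ici 0) := by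
  rw [s13B_eq_pi, s13PM, Measure.pi_pi]
  rw [Finset.prod_congr rfl (fun j _ => show (gaussianReal (ν j) 1) (if j ∈ J then Ici (0:ℝ) else univ)
      = if j ∈ J then gaussianReal (ν j) 1 (Ici 0) else 1 by split_ifs <;> simp)]
  rw [Finset.prod_ite_mem, Finset.univ_inter]

lemma s13B_measure_pos {p : ℕ} (ν : Fin p → ℝ) (J : Finset (Fin p)) :
    0 < s13PM ν (s13B J) := by
  rw [s13B_measure]
  rw [pos_iff_ne_zero, Ne, Finset.prod_eq_zero_iff]
  push_neg
  exact fun j _ => (s13_Ici_pos (ν j)).ne'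

open scoped ENNReal

lemma s13_lmarginal_meas_congr {δ : Type*} [DecidableEq δ] {τ : δ → Type*}
    [∀ i, MeasurableSpace (τ i)] {μ μ' : ∀ i, Measure (τ i)} {s : Finset δ}
    (h : ∀ j ∈ s, μ j = μ' j) (f : (∀ i, τ i) → ℝ≥0∞) (x : ∀ i, τ i) :
    (∫⋯∫⁻_s, f ∂μ) x = (∫⋯∫⁻_s, f ∂μ') x := by
  unfold MeasureTheory.lmarginal
  have : (fun i : s => μ i) = fun i : s => μ' i := funext fun j => h j j.2
  rw [this]

lemma s13_lmarginal_mul_const {δ : Type*} [DecidableEq δ] {τ : δ → Type*}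
    [∀ i, MeasurableSpace (τ i)] (μ : ∀ i, Measure (τ i)) (s : Finset δ)
    (f : (∀ i, τ i) → ℝ≥0∞) {c : ℝ≥0∞} (hc : c ≠ ⊤) (x : ∀ i, τ i) :
    (∫⋯∫⁻_s, (fun y => f y * c) ∂μ) x = (∫⋯∫⁻_s, f ∂μ) x * c := by
  unfold MeasureTheory.lmarginal
  exact lintegral_mul_const' c _ hc

lemma s13_key_repr {p : ℕ} (I : Finset (Fin p)) (q : ℝ) (i : Fin p) (hi : i ∈ I)
    (m : Fin p → ℝ) :
    s13PM m (s13A I q ∩ s13B I)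
      = (∫⋯∫⁻_(Finset.univ.erase i),
          (fun x => gaussianReal (m i) 1
              {t : ℝ | (q - ∑ j ∈ I.erase i, (x j)^2) < t^2 ∧ 0 ≤ t}
            * (s13B (I.erase i)).indicator 1 x)
          ∂(fun j => gaussianReal (m j) 1)) 0 := by
  have hABm : MeasurableSet (s13A I q ∩ s13B I) := (s13A_meas I q).inter (s13B_meas I)
  have hind : Measurable ((s13A I q ∩ s13B I).indicator (1 : (Fin p → ℝ) → ℝ≥0∞)) :=
    measurable_one.indicator hABm
  rw [show s13PM m (s13A I q ∩ s13B I)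
      = ∫⁻ y, (s13A I q ∩ s13B I).indicator 1 y ∂s13PM m from
    (lintegral_indicator_one hABm).symm]
  rw [s13PM, lintegral_eq_lmarginal_univ (0 : Fin p → ℝ)]
  rw [MeasureTheory.lmarginal_erase' _ hind (Finset.mem_univ i)]
  congr 1
  funext x
  have hupd : ∀ xi : ℝ, (s13A I q ∩ s13B I).indicator 1 (Function.update x i xi)
      = ((fun xi : ℝ => Function.update x i xi) ⁻¹' (s13A I q ∩ s13B I)).indicator
          (1 : ℝ → ℝ≥0∞) xi := by
    intro xi
    classical
    rw [Set.indicator_apply, Set.indicator_apply, Set.mem_preimage]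
    split_ifs <;> rfl
  simp only [hupd]
  rw [lintegral_indicator_one ((measurable_update x) hABm)]
  have hsum : ∀ xi : ℝ, ∑ j ∈ I, (Function.update x i xi j)^2
      = xi^2 + ∑ j ∈ I.erase i, (x j)^2 := by
    intro xi
    rw [← Finset.add_sum_erase I _ hi]
    congr 1
    · rw [Function.update_self]
    · exact Finset.sum_congr rfl fun j hj => by
        rw [Function.update_of_ne (Finset.ne_of_mem_erase hj)]
  by_cases hx : ∀ j ∈ I.erase i, 0 ≤ x j
  · have hpre : (fun xi : ℝ => Function.update x i xi) ⁻¹' (s13A I q ∩ s13B I)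
        = {t : ℝ | (q - ∑ j ∈ I.erase i, (x j)^2) < t^2 ∧ 0 ≤ t} := by
      ext xi
      simp only [mem_preimage, mem_inter_iff, s13A, s13B, mem_setOf_eq, hsum]
      constructor
      · rintro ⟨h1, h2⟩
        refine ⟨by linarith, ?_⟩
        have := h2 i hi
        rwa [Function.update_self] at this
      · rintro ⟨h1, h2⟩
        refine ⟨by linarith, fun j hj => ?_⟩
        by_cases hji : j = i
        · subst hji; rwa [Function.update_self]
        · rw [Function.update_of_ne hji]
          exact hx j (Finset.mem_erase.mpr ⟨hji, hj⟩)
    rw [hpre, Set.indicator_of_mem (show x ∈ s13B (I.erase i) from hx), Pi.one_apply, mul_one]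
  · have hpre : (fun xi : ℝ => Function.update x i xi) ⁻¹' (s13A I q ∩ s13B I) = ∅ := by
      ext xi
      simp only [mem_preimage, mem_inter_iff, s13A, s13B, mem_setOf_eq, mem_empty_iff_false,
        iff_false, not_and]
      intro _ h2
      exact hx fun j hj => by
        have := h2 j (Finset.mem_of_mem_erase hj)
        rwa [Function.update_of_ne (Finset.ne_of_mem_erase hj)] at this
    rw [hpre, measure_empty, Set.indicator_of_notMem (show x ∉ s13B (I.erase i) from hx), mul_zero]

lemma s13_step {p : ℕ} (I : Finset (Fin p)) (q : ℝ) (ν : Fin p → ℝ) (i : Fin p)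
    (hi : i ∈ I) (hνi : ν i ≤ 0) :
    s13PM ν (s13A I q ∩ s13B I) * gaussianReal 0 1 (Ici 0)
      ≤ s13PM (Function.update ν i 0) (s13A I q ∩ s13B I)
          * gaussianReal (ν i) 1 (Ici 0) := by
  have h1 := s13_key_repr I q i hi ν
  have h2 := s13_key_repr I q i hi (Function.update ν i 0)
  rw [Function.update_self] at h2
  have h2' := h2.trans (s13_lmarginal_meas_congr
    (μ := fun j => gaussianReal (Function.update ν i 0 j) 1)
    (μ' := fun j => gaussianReal (ν j) 1)
    (fun j hj => by simp only [Function.update_of_ne (Finset.ne_of_mem_erase hj)]) _ 0)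
  rw [h1, h2']
  rw [← s13_lmarginal_mul_const (fun j => gaussianReal (ν j) 1) (Finset.univ.erase i)
      (fun x => gaussianReal (ν i) 1 {t : ℝ | (q - ∑ j ∈ I.erase i, (x j)^2) < t^2 ∧ 0 ≤ t}
        * (s13B (I.erase i)).indicator 1 x) (s13_Ici_ne_top 0) 0]
  rw [← s13_lmarginal_mul_const (fun j => gaussianReal (ν j) 1) (Finset.univ.erase i)
      (fun x => gaussianReal 0 1 {t : ℝ | (q - ∑ j ∈ I.erase i, (x j)^2) < t^2 ∧ 0 ≤ t}
        * (s13B (I.erase i)).indicator 1 x) (s13_Ici_ne_top (ν i)) 0]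
  apply MeasureTheory.lmarginal_mono
  intro x
  dsimp only
  rw [mul_right_comm, mul_right_comm _ _ (gaussianReal (ν i) 1 (Ici 0))]
  exact mul_le_mul_left (s13_cross_slice (ν i) hνi _) _

lemma s13_step' {p : ℕ} (I : Finset (Fin p)) (q : ℝ) (ν : Fin p → ℝ) (i : Fin p)
    (hi : i ∈ I) (hνi : ν i ≤ 0) :
    s13PM ν (s13A I q ∩ s13B I) * s13PM (Function.update ν i 0) (s13B I)
      ≤ s13PM (Function.update ν i 0) (s13A I q ∩ s13B I) * s13PM ν (s13B I) := by
  rw [s13B_measure, s13B_measure, ← Finset.mul_prod_erase _ _ hi,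
    ← Finset.mul_prod_erase _ _ hi, Function.update_self]
  rw [Finset.prod_congr rfl (fun j hj => show gaussianReal (Function.update ν i 0 j) 1 (Ici 0)
      = gaussianReal (ν j) 1 (Ici 0) by
    rw [Function.update_of_ne (Finset.ne_of_mem_erase hj)])]
  rw [← mul_assoc, ← mul_assoc]
  exact mul_le_mul_left (s13_step I q ν i hi hνi) _

lemma s13_chain {p : ℕ} (I : Finset (Fin p)) (q : ℝ) (μ : Fin p → ℝ)
    (hμ : ∀ i, μ i ≤ 0) (J : Finset (Fin p)) (hJ : J ⊆ I) :
    s13PM μ (s13A I q ∩ s13B I) * s13PM (fun j => if j ∈ J then 0 else μ j) (s13B I)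
      ≤ s13PM (fun j => if j ∈ J then 0 else μ j) (s13A I q ∩ s13B I)
          * s13PM μ (s13B I) := by
  classical
  induction J using Finset.induction_on with
  | empty =>
    simp only [Finset.notMem_empty, if_false]
    exact le_of_eq (by rw [show (fun j => μ j) = μ from rfl, mul_comm])
  | @insert i J hiJ ih =>
    have hJI : J ⊆ I := fun j hj => hJ (Finset.mem_insert_of_mem hj)
    have hiI : i ∈ I := hJ (Finset.mem_insert_self i J)
    set νJ : Fin p → ℝ := fun j => if j ∈ J then 0 else μ j with hνJ
    have hupd : (fun j => if j ∈ insert i J then 0 else μ j) = Function.update νJ i 0 := by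
      funext j
      by_cases hji : j = i
      · subst hji; rw [Function.update_self, if_pos (Finset.mem_insert_self j J)]
      · rw [Function.update_of_ne hji, hνJ]
        simp only [Finset.mem_insert, hji, false_or]
    have hνJi : νJ i ≤ 0 := by
      show (if i ∈ J then (0:ℝ) else μ i) ≤ 0
      rw [if_neg hiJ]; exact hμ i
    have hstep := s13_step' I q νJ i hiI hνJi
    have ihh := ih hJI
    rw [hupd]
    have hbJ0 : s13PM νJ (s13B I) ≠ 0 := (s13B_measure_pos νJ I).ne'
    have hbJt : s13PM νJ (s13B I) ≠ ⊤ := measure_ne_top _ _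
    rw [← ENNReal.mul_le_mul_iff_left hbJ0 hbJt]
    calc s13PM μ (s13A I q ∩ s13B I) * s13PM (Function.update νJ i 0) (s13B I)
          * s13PM νJ (s13B I)
        = s13PM μ (s13A I q ∩ s13B I) * s13PM νJ (s13B I)
          * s13PM (Function.update νJ i 0) (s13B I) := by ring
      _ ≤ s13PM νJ (s13A I q ∩ s13B I) * s13PM μ (s13B I)
          * s13PM (Function.update νJ i 0) (s13B I) := mul_le_mul_left ihh _
      _ = s13PM νJ (s13A I q ∩ s13B I) * s13PM (Function.update νJ i 0) (s13B I)
          * s13PM μ (s13B I) := by ring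
      _ ≤ s13PM (Function.update νJ i 0) (s13A I q ∩ s13B I) * s13PM νJ (s13B I)
          * s13PM μ (s13B I) := mul_le_mul_left hstep _
      _ = s13PM (Function.update νJ i 0) (s13A I q ∩ s13B I) * s13PM μ (s13B I)
          * s13PM νJ (s13B I) := by ring

lemma s13_reflect_measurable {p : ℕ} (i : Fin p) :
    Measurable (fun y : Fin p → ℝ => Function.update y i (-(y i))) := by
  apply measurable_pi_iff.mpr
  intro j
  by_cases hji : j = i
  · subst hji
    simp only [Function.update_self]
    exact (measurable_pi_apply j).neg
  · simp only [Function.update_of_ne hji]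
    exact measurable_pi_apply j

lemma s13_gauss_neg : Measure.map (fun x : ℝ => -x) (gaussianReal 0 1) = gaussianReal 0 1 := by
  have h := gaussianReal_map_const_mul (μ := 0) (v := 1) (-1)
  simp only [neg_mul, one_mul, mul_zero, neg_zero] at h
  rw [h]
  congr 1
  ext
  norm_num

lemma s13_reflect_pres {p : ℕ} (ν : Fin p → ℝ) (i : Fin p) (hνi : ν i = 0) :
    Measure.map (fun y : Fin p → ℝ => Function.update y i (-(y i))) (s13PM ν) = s13PM ν := by
  symm
  apply Measure.pi_eq
  intro s hs
  rw [Measure.map_apply (s13_reflect_measurable i) (MeasurableSet.univ_pi hs)]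
  have hpre : (fun y : Fin p → ℝ => Function.update y i (-(y i))) ⁻¹' (univ.pi s)
      = univ.pi (fun j => if j = i then (fun x : ℝ => -x) ⁻¹' (s i) else s j) := by
    ext y
    simp only [mem_preimage, mem_pi, mem_univ, forall_true_left]
    constructor
    · intro h j
      by_cases hji : j = i
      · subst hji; rw [if_pos rfl]; have := h j; rwa [Function.update_self] at this
      · rw [if_neg hji]; have := h j; rwa [Function.update_of_ne hji] at this
    · intro h j
      by_cases hji : j = i
      · subst hji; rw [Function.update_self]; have := h j; rwa [if_pos rfl] at this
      · rw [Function.update_of_ne hji]; have := h j; rwa [if_neg hji] at this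
  rw [hpre, s13PM, Measure.pi_pi]
  apply Finset.prod_congr rfl
  intro j _
  by_cases hji : j = i
  · subst hji
    rw [if_pos rfl, hνi, ← Measure.map_apply measurable_neg (hs j), s13_gauss_neg]
  · rw [if_neg hji]

lemma s13_hyperplane_null {p : ℕ} (ν : Fin p → ℝ) (i : Fin p) :
    s13PM ν {y : Fin p → ℝ | y i = 0} = 0 := by
  have : {y : Fin p → ℝ | y i = 0} = univ.pi (fun j => if j = i then ({0} : Set ℝ) else univ) := by
    ext y
    simp only [mem_setOf_eq, mem_pi, mem_univ, forall_true_left]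
    constructor
    · intro h j
      by_cases hji : j = i
      · subst hji; rw [if_pos rfl]; exact h
      · rw [if_neg hji]; trivial
    · intro h
      have := h i; rwa [if_pos rfl] at this
  rw [this, s13PM, Measure.pi_pi]
  apply Finset.prod_eq_zero (Finset.mem_univ i)
  rw [if_pos rfl]
  exact (gaussianReal_absolutelyContinuous (ν i) one_ne_zero) (measure_singleton 0)

lemma s13_halving {p : ℕ} (ν : Fin p → ℝ) (i : Fin p) (hνi : ν i = 0)
    (C : Set (Fin p → ℝ)) (hC : MeasurableSet C)
    (hCinv : (fun y : Fin p → ℝ => Function.update y i (-(y i))) ⁻¹' C = C) :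
    s13PM ν (C ∩ {y | 0 ≤ y i}) * 2 = s13PM ν C := by
  have hplus : MeasurableSet {y : Fin p → ℝ | 0 ≤ y i} :=
    measurableSet_le measurable_const (measurable_pi_apply i)
  have hminus : MeasurableSet {y : Fin p → ℝ | y i ≤ 0} :=
    measurableSet_le (measurable_pi_apply i) measurable_const
  have h1 : s13PM ν (C ∩ {y | 0 ≤ y i}) = s13PM ν (C ∩ {y | y i ≤ 0}) := by
    conv_rhs => rw [← s13_reflect_pres ν i hνi]
    rw [Measure.map_apply (s13_reflect_measurable i) (hC.inter hminus)]
    congr 1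
    rw [Set.preimage_inter, hCinv]
    congr 1
    ext y
    simp only [mem_preimage, mem_setOf_eq, Function.update_self]
    constructor <;> intro h <;> linarith
  have hunion : (C ∩ {y | 0 ≤ y i}) ∪ (C ∩ {y | y i ≤ 0}) = C := by
    ext y
    simp only [mem_union, mem_inter_iff, mem_setOf_eq]
    constructor
    · rintro (⟨h, -⟩ | ⟨h, -⟩) <;> exact h
    · intro h
      rcases le_total 0 (y i) with h0 | h0
      exacts [Or.inl ⟨h, h0⟩, Or.inr ⟨h, h0⟩]
  have hinter : s13PM ν ((C ∩ {y | 0 ≤ y i}) ∩ (C ∩ {y | y i ≤ 0})) = 0 := by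
    apply measure_mono_null _ (s13_hyperplane_null ν i)
    rintro y ⟨⟨-, h1⟩, ⟨-, h2⟩⟩
    exact le_antisymm h2 h1
  have := measure_union_add_inter (μ := s13PM ν) (C ∩ {y | 0 ≤ y i}) (hC.inter hminus)
  rw [hunion, hinter, add_zero] at this
  rw [mul_two, h1]
  nth_rewrite 1 [← h1]
  exact this.symm

lemma s13_sym {p : ℕ} (ν : Fin p → ℝ) (I : Finset (Fin p)) (hν : ∀ i ∈ I, ν i = 0)
    (C : Set (Fin p → ℝ)) (hC : MeasurableSet C)
    (hCinv : ∀ i ∈ I, (fun y : Fin p → ℝ => Function.update y i (-(y i))) ⁻¹' C = C)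
    (J : Finset (Fin p)) (hJI : J ⊆ I) :
    s13PM ν (C ∩ s13B J) * 2 ^ J.card = s13PM ν C := by
  classical
  induction J using Finset.induction_on with
  | empty =>
    simp only [Finset.card_empty, pow_zero, mul_one]
    congr 1
    ext y
    simp [s13B]
  | @insert i J hiJ ih =>
    have hJI' : J ⊆ I := fun j hj => hJI (Finset.mem_insert_of_mem hj)
    have hiI : i ∈ I := hJI (Finset.mem_insert_self i J)
    have hsplit : C ∩ s13B (insert i J) = (C ∩ s13B J) ∩ {y | 0 ≤ y i} := by
      ext y
      simp only [mem_inter_iff, s13B, mem_setOf_eq, Finset.mem_insert]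
      constructor
      · rintro ⟨hc, h⟩
        exact ⟨⟨hc, fun j hj => h j (Or.inr hj)⟩, h i (Or.inl rfl)⟩
      · rintro ⟨⟨hc, h⟩, hi0⟩
        refine ⟨hc, fun j hj => ?_⟩
        rcases hj with rfl | hj
        exacts [hi0, h j hj]
    have hinv : (fun y : Fin p → ℝ => Function.update y i (-(y i))) ⁻¹' (C ∩ s13B J)
        = C ∩ s13B J := by
      rw [Set.preimage_inter, hCinv i hiI]
      congr 1
      ext y
      simp only [mem_preimage, s13B, mem_setOf_eq]
      refine ⟨fun h j hj => ?_, fun h j hj => ?_⟩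
      · have := h j hj
        rwa [Function.update_of_ne (fun he => hiJ (by rw [← he]; exact hj))] at this
      · rw [Function.update_of_ne (fun he => hiJ (by rw [← he]; exact hj))]
        exact h j hj
    rw [hsplit, Finset.card_insert_of_notMem hiJ, pow_succ, ← mul_assoc,
      mul_right_comm, s13_halving ν i (hν i hiI) (C ∩ s13B J) (hC.inter (s13B_meas J)) hinv]
    exact ih hJI'

lemma s13_A_reflect {p : ℕ} (I : Finset (Fin p)) (q : ℝ) (i : Fin p) :
    (fun y : Fin p → ℝ => Function.update y i (-(y i))) ⁻¹' s13A I q = s13A I q := by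
  ext y
  simp only [mem_preimage, s13A, mem_setOf_eq]
  rw [Finset.sum_congr rfl fun j (hj : j ∈ I) =>
    show (Function.update y i (-(y i)) j)^2 = (y j)^2 from by
      by_cases hji : j = i
      · subst hji; rw [Function.update_self]; ring
      · rw [Function.update_of_ne hji]]

lemma s13_pi_inst {ι : Type*} {i1 i2 : Fintype ι} (μ : ι → Measure ℝ) :
    @Measure.pi ι (fun _ => ℝ) i1 (fun _ => inferInstance) μ
      = @Measure.pi ι (fun _ => ℝ) i2 (fun _ => inferInstance) μ := by
  congr 1
  exact Subsingleton.elim _ _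

lemma s13_ident {p k : ℕ} (I : Finset (Fin p)) (hk : I.card = k) (ν : Fin p → ℝ)
    (hν : ∀ i ∈ I, ν i = 0) (q : ℝ) :
    s13PM ν (s13A I q) = chiSq k {x | q < x} := by
  classical
  have hcard : Fintype.card {x // x ∈ I} = k := by rw [Fintype.card_coe, hk]
  let e : Fin k ≃ {x // x ∈ I} := (Fintype.equivFinOfCardEq hcard).symm
  let T : (Fin p → ℝ) → (Fin k → ℝ) := fun y j => y (e j)
  have hTmeas : Measurable T := measurable_pi_iff.mpr fun j => measurable_pi_apply _
  have hmap : Measure.map T (s13PM ν) = Measure.pi (fun _ : Fin k => gaussianReal 0 1) := by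
    have hT : T = (fun z : {x // x ∈ I} → ℝ => fun j => z (e j))
        ∘ (fun y : Fin p → ℝ => fun j : {x // x ∈ I} => y j) := rfl
    rw [hT, ← Measure.map_map
      (show Measurable fun z : {x // x ∈ I} → ℝ => (fun j => z (e j) : Fin k → ℝ) from
        measurable_pi_iff.mpr fun j => measurable_pi_apply _)
      (show Measurable fun y : Fin p → ℝ => (fun j : {x // x ∈ I} => y j) from
        measurable_pi_iff.mpr fun j => measurable_pi_apply _)]
    have h1 : Measure.map (fun y : Fin p → ℝ => fun j : {x // x ∈ I} => y j) (s13PM ν)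
        = Measure.pi (fun _ : {x // x ∈ I} => gaussianReal 0 1) := by
      have hfst : (fun y : Fin p → ℝ => fun j : {x // x ∈ I} => y j)
          = Prod.fst ∘ (MeasurableEquiv.piEquivPiSubtypeProd (fun _ : Fin p => ℝ) (· ∈ I)) := rfl
      rw [hfst, ← Measure.map_map measurable_fst (MeasurableEquiv.measurable _), s13PM]
      rw [(measurePreserving_piEquivPiSubtypeProd
        (fun i : Fin p => gaussianReal (ν i) 1) (· ∈ I)).map_eq]
      rw [Measure.map_fst_prod]
      simp only [measure_univ, one_smul]
      rw [show (fun i : {x // x ∈ I} => gaussianReal (ν i.1) 1)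
          = (fun _ : {x // x ∈ I} => gaussianReal 0 1) from funext fun j => by rw [hν j j.2]]
      exact s13_pi_inst _
    rw [h1]
    have h2 := MeasurePreserving.symm _
      (measurePreserving_piCongrLeft (fun _ : {x // x ∈ I} => gaussianReal 0 1) e)
    have h3 : (fun z : {x // x ∈ I} → ℝ => fun j => z (e j))
        = ⇑(MeasurableEquiv.piCongrLeft (fun _ : {x // x ∈ I} => ℝ) e).symm := by
      funext z
      funext j
      simp [MeasurableEquiv.piCongrLeft, Equiv.piCongrLeft_symm_apply]
    rw [h3, h2.map_eq]
  have hSmeas : MeasurableSet {x : Fin k → ℝ | q < ∑ j, (x j)^2} :=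
    measurableSet_lt measurable_const
      (Finset.measurable_sum _ fun j _ => (measurable_pi_apply j).pow_const 2)
  have hAset : s13A I q = T ⁻¹' {x : Fin k → ℝ | q < ∑ j, (x j)^2} := by
    ext y
    simp only [mem_preimage, s13A, mem_setOf_eq, T]
    rw [show ∑ j : Fin k, (y (e j))^2 = ∑ i ∈ I, (y i)^2 from
      (Fintype.sum_equiv e _ (fun i : {x // x ∈ I} => (y i)^2) fun j => rfl).trans
        (Finset.sum_coe_sort I fun i => (y i)^2)]
  rw [hAset, ← Measure.map_apply hTmeas hSmeas, hmap, chiSq,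
    Measure.map_apply (Finset.measurable_sum _ fun j _ => (measurable_pi_apply j).pow_const 2)
      (show MeasurableSet {x : ℝ | q < x} from measurableSet_Ioi)]
  rfl

/-- for independent Yᵢ ~ N(μᵢ,1), μᵢ ≤ 0, a subset I of size k ≥ 1
and q_k the (1-α)-quantile of χ²(k), P(∑_{i∈I} Yᵢ² > q_k | Yᵢ ≥ 0 ∀ i ∈ I) ≤ α. -/
theorem stmt13 (p : ℕ) (μ : Fin p → ℝ) (hμ : ∀ i, μ i ≤ 0)
    (I : Finset (Fin p)) (k : ℕ) (hk : I.card = k) (hk1 : 1 ≤ k)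
    (α : ℝ) (hα : α ∈ Set.Ioo (0:ℝ) 1)
    (qk : ℝ) (hqk : chiSq k {x | qk < x} = ENNReal.ofReal α)
    (hpos : 0 < (Measure.pi fun i : Fin p => gaussianReal (μ i) 1)
      {y | ∀ i ∈ I, 0 ≤ y i}) :
    (Measure.pi fun i : Fin p => gaussianReal (μ i) 1)
        {y | (∑ i ∈ I, (y i) ^ 2) > qk ∧ ∀ i ∈ I, 0 ≤ y i} /
      (Measure.pi fun i : Fin p => gaussianReal (μ i) 1) {y | ∀ i ∈ I, 0 ≤ y i} ≤
    ENNReal.ofReal α := by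
  classical
  set ν : Fin p → ℝ := fun j => if j ∈ I then 0 else μ j with hν
  have hν0 : ∀ i ∈ I, ν i = 0 := fun i hi => if_pos hi
  have hpos' : 0 < s13PM μ (s13B I) := hpos
  have hchain := s13_chain I qk μ hμ I (subset_refl I)
  have sB : s13PM ν (s13B I) * 2 ^ k = 1 := by
    have h := s13_sym ν I hν0 univ MeasurableSet.univ (fun i _ => by rw [preimage_univ])
      I (subset_refl I)
    rwa [univ_inter, measure_univ, hk] at h
  have sAB : s13PM ν (s13A I qk ∩ s13B I) * 2 ^ k = ENNReal.ofReal α := by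
    have h := s13_sym ν I hν0 (s13A I qk) (s13A_meas I qk)
      (fun i _ => s13_A_reflect I qk i) I (subset_refl I)
    rwa [hk, s13_ident I hk ν hν0 qk, hqk] at h
  have key : s13PM μ (s13A I qk ∩ s13B I) ≤ ENNReal.ofReal α * s13PM μ (s13B I) := by
    calc s13PM μ (s13A I qk ∩ s13B I)
        = s13PM μ (s13A I qk ∩ s13B I) * (s13PM ν (s13B I) * 2 ^ k) := by
          rw [sB, mul_one]
      _ = (s13PM μ (s13A I qk ∩ s13B I) * s13PM ν (s13B I)) * 2 ^ k := by ring
      _ ≤ (s13PM ν (s13A I qk ∩ s13B I) * s13PM μ (s13B I)) * 2 ^ k :=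
          mul_le_mul_left hchain _
      _ = (s13PM ν (s13A I qk ∩ s13B I) * 2 ^ k) * s13PM μ (s13B I) := by ring
      _ = ENNReal.ofReal α * s13PM μ (s13B I) := by rw [sAB]
  show s13PM μ (s13A I qk ∩ s13B I) / s13PM μ (s13B I) ≤ ENNReal.ofReal α
  exact (ENNReal.div_le_iff_le_mul (Or.inl hpos'.ne') (Or.inl (measure_ne_top _ _))).mpr key
end

section
/- Let Y ~ N(μ, I_p) with μ₁ ≤ μ₂ ≤ … ≤ μ_p. Then P(Y₁ ≤ Y₂ ≤ … ≤ Y_p) ≥ 1/p!. -/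
open MeasureTheory ProbabilityTheory

open scoped ENNReal

namespace Stmt16Aux

lemma piCongrLeft_const_apply {p : ℕ} (σ : Equiv.Perm (Fin p)) (y : Fin p → ℝ) (i : Fin p) :
    Equiv.piCongrLeft (fun _ : Fin p => ℝ) σ y i = y (σ.symm i) := by
  simpa using Equiv.piCongrLeft_apply_apply (P := fun _ : Fin p => ℝ) (e := σ) y (σ.symm i)

lemma lintegral_pi_prod : ∀ {n : ℕ} (f : Fin n → ℝ → ℝ≥0∞), (∀ i, Measurable (f i)) →
    ∫⁻ y, ∏ i, f i (y i) ∂(Measure.pi fun _ : Fin n => (volume : Measure ℝ))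
      = ∏ i, ∫⁻ x, f i x := by
  intro n
  induction n with
  | zero => intro f hf; simp
  | succ n ih =>
    intro f hf
    have hmp := (measurePreserving_piFinSuccAbove
      (fun _ : Fin (n + 1) => (volume : Measure ℝ)) 0).symm
      (MeasurableEquiv.piFinSuccAbove (fun _ : Fin (n + 1) => ℝ) 0)
    rw [← hmp.map_eq, MeasureTheory.lintegral_map_equiv]
    simp only [MeasurableEquiv.piFinSuccAbove_symm_apply, Fin.insertNthEquiv, Equiv.coe_fn_mk,
      Fin.insertNth_zero, Fin.zero_succAbove, cast_eq, Fin.prod_univ_succ, Fin.cons_zero,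
      Fin.cons_succ]
    have hg : Measurable fun b : Fin n → ℝ => ∏ j, f j.succ (b j) :=
      Finset.measurable_prod _ fun j _ => (hf _).comp (measurable_pi_apply j)
    rw [MeasureTheory.lintegral_prod_mul (hf 0).aemeasurable hg.aemeasurable,
      ih _ (fun j => hf j.succ)]

lemma pi_gauss {p : ℕ} (μ : Fin p → ℝ) :
    (Measure.pi fun i : Fin p => gaussianReal (μ i) 1) =
      (Measure.pi fun _ : Fin p => (volume : Measure ℝ)).withDensity
        (fun y => ∏ i, gaussianPDF (μ i) 1 (y i)) := by
  refine Measure.pi_eq fun s hs => ?_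
  rw [withDensity_apply _ (MeasurableSet.univ_pi hs),
    ← lintegral_indicator (MeasurableSet.univ_pi hs)]
  have hind : ∀ y : Fin p → ℝ,
      Set.indicator (Set.pi Set.univ s) (fun y => ∏ i, gaussianPDF (μ i) 1 (y i)) y
        = ∏ i, Set.indicator (s i) (gaussianPDF (μ i) 1) (y i) := by
    intro y
    by_cases h : y ∈ Set.pi Set.univ s
    · rw [Set.indicator_of_mem h]
      exact Finset.prod_congr rfl fun i _ =>
        (Set.indicator_of_mem (h i (Set.mem_univ i)) _).symm
    · rw [Set.indicator_of_notMem h]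
      obtain ⟨i, hi⟩ : ∃ i, y i ∉ s i := by
        by_contra hc
        push_neg at hc
        exact h fun i _ => hc i
      exact (Finset.prod_eq_zero (Finset.mem_univ i) (Set.indicator_of_notMem hi _)).symm
  rw [lintegral_congr hind,
    lintegral_pi_prod _ (fun i => (measurable_gaussianPDF _ _).indicator (hs i))]
  refine Finset.prod_congr rfl fun i _ => ?_
  rw [lintegral_indicator (hs i), ← gaussianReal_apply _ one_ne_zero]

lemma gauss_prod_le {p : ℕ} (μ y : Fin p → ℝ) (hμ : Monotone μ)
    (hy : ∀ i j : Fin p, i ≤ j → y i ≤ y j) (σ : Equiv.Perm (Fin p)) :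
    ∏ i, gaussianPDFReal (μ (σ i)) 1 (y i) ≤ ∏ i, gaussianPDFReal (μ i) 1 (y i) := by
  have hmono : Monovary y μ := by
    intro i j h
    exact hy i j (le_of_not_gt fun hj : j < i => (hμ hj.le).not_gt h)
  have hre : ∑ i, y i * μ (σ i) ≤ ∑ i, y i * μ i := hmono.sum_mul_comp_perm_le_sum_mul
  have hperm : ∑ i, (μ (σ i)) ^ 2 = ∑ i, (μ i) ^ 2 := Equiv.sum_comp σ fun i => (μ i) ^ 2
  have hsq : ∑ i, (y i - μ i) ^ 2 ≤ ∑ i, (y i - μ (σ i)) ^ 2 := by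
    have e1 : ∑ i, (y i - μ i) ^ 2
        = ∑ i, ((y i) ^ 2 + (μ i) ^ 2) - 2 * ∑ i, y i * μ i := by
      rw [Finset.mul_sum, ← Finset.sum_sub_distrib]
      exact Finset.sum_congr rfl fun i _ => by ring
    have e2 : ∑ i, (y i - μ (σ i)) ^ 2
        = ∑ i, ((y i) ^ 2 + (μ (σ i)) ^ 2) - 2 * ∑ i, y i * μ (σ i) := by
      rw [Finset.mul_sum, ← Finset.sum_sub_distrib]
      exact Finset.sum_congr rfl fun i _ => by ring
    have e3 : ∑ i, ((y i) ^ 2 + (μ (σ i)) ^ 2) = ∑ i, ((y i) ^ 2 + (μ i) ^ 2) := by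
      rw [Finset.sum_add_distrib, Finset.sum_add_distrib, hperm]
    linarith
  simp only [gaussianPDFReal, NNReal.coe_one, mul_one]
  rw [Finset.prod_mul_distrib, Finset.prod_mul_distrib, Finset.prod_const,
    ← Real.exp_sum, ← Real.exp_sum]
  have hc : (0 : ℝ) ≤ (Real.sqrt (2 * Real.pi))⁻¹ ^ (Finset.univ : Finset (Fin p)).card :=
    pow_nonneg (inv_nonneg.2 (Real.sqrt_nonneg _)) _
  refine mul_le_mul_of_nonneg_left ?_ hc
  rw [Real.exp_le_exp]
  have l : ∀ a : Fin p → ℝ, ∑ i, -(a i) ^ 2 / 2 = -(∑ i, (a i) ^ 2) / 2 := by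
    intro a
    rw [← Finset.sum_div, ← Finset.sum_neg_distrib]
  calc ∑ i, -(y i - μ (σ i)) ^ 2 / 2 = -(∑ i, (y i - μ (σ i)) ^ 2) / 2 := l _
    _ ≤ -(∑ i, (y i - μ i) ^ 2) / 2 := by linarith
    _ = ∑ i, -(y i - μ i) ^ 2 / 2 := (l _).symm

end Stmt16Aux

open Stmt16Aux

/-- for Y ~ N(μ, I_p) with μ₁ ≤ ⋯ ≤ μ_p,
P(Y₁ ≤ ⋯ ≤ Y_p) ≥ 1/p!. -/
theorem stmt16 (p : ℕ) (μ : Fin p → ℝ) (hμ : Monotone μ) :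
    ENNReal.ofReal ((1:ℝ) / (Nat.factorial p)) ≤
      (Measure.pi fun i : Fin p => gaussianReal (μ i) 1)
        {y | ∀ i j : Fin p, i ≤ j → y i ≤ y j} := by
  classical
  set A : Set (Fin p → ℝ) := {y | ∀ i j : Fin p, i ≤ j → y i ≤ y j} with hAdef
  have hAm : MeasurableSet A := by
    have hrw : A = ⋂ (i : Fin p) (j : Fin p), {y : Fin p → ℝ | i ≤ j → y i ≤ y j} := by
      ext y; simp [hAdef, Set.mem_iInter]
    rw [hrw]
    refine MeasurableSet.iInter fun i => MeasurableSet.iInter fun j => ?_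
    by_cases h : i ≤ j
    · have : {y : Fin p → ℝ | i ≤ j → y i ≤ y j} = {y | y i ≤ y j} := by ext; simp [h]
      rw [this]
      exact measurableSet_le (measurable_pi_apply i) (measurable_pi_apply j)
    · have : {y : Fin p → ℝ | i ≤ j → y i ≤ y j} = Set.univ := by ext; simp [h]
      rw [this]; exact MeasurableSet.univ
  -- comparison of permuted means
  have hcomp : ∀ σ : Equiv.Perm (Fin p),
      (Measure.pi fun i => gaussianReal (μ (σ i)) 1) A
        ≤ (Measure.pi fun i => gaussianReal (μ i) 1) A := by
    intro σ
    rw [pi_gauss, pi_gauss, withDensity_apply _ hAm, withDensity_apply _ hAm]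
    refine setLIntegral_mono
      (Finset.measurable_prod _ fun i _ =>
        (measurable_gaussianPDF _ _).comp (measurable_pi_apply i)) fun y hy => ?_
    simp only [gaussianPDF]
    rw [← ENNReal.ofReal_prod_of_nonneg (fun i _ => gaussianPDFReal_nonneg _ _ _),
      ← ENNReal.ofReal_prod_of_nonneg (fun i _ => gaussianPDFReal_nonneg _ _ _)]
    exact ENNReal.ofReal_le_ofReal (gauss_prod_le μ y hμ hy σ)
  -- sets sorted by a permutation
  set B : Equiv.Perm (Fin p) → Set (Fin p → ℝ) :=
    fun σ => {y | ∀ i j : Fin p, i ≤ j → y (σ i) ≤ y (σ j)} with hBdef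
  have hB : ∀ σ : Equiv.Perm (Fin p),
      (Measure.pi fun i => gaussianReal (μ i) 1) (B σ)
        = (Measure.pi fun i => gaussianReal (μ (σ i)) 1) A := by
    intro σ
    have h0 := measurePreserving_piCongrLeft
      (fun i => gaussianReal (μ (σ i)) 1) σ.symm
    have h : MeasurePreserving (MeasurableEquiv.piCongrLeft (fun _ : Fin p => ℝ) σ.symm)
        (Measure.pi fun i => gaussianReal (μ i) 1)
        (Measure.pi fun i => gaussianReal (μ (σ i)) 1) := by
      simpa using h0
    have hset : (MeasurableEquiv.piCongrLeft (fun _ : Fin p => ℝ) σ.symm) ⁻¹' A = B σ := by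
      ext y
      simp only [Set.mem_preimage, hAdef, Set.mem_setOf_eq, hBdef,
        MeasurableEquiv.coe_piCongrLeft, piCongrLeft_const_apply, Equiv.symm_symm]
    rw [← hset]
    exact h.measure_preimage hAm.nullMeasurableSet
  have hcover : (Set.univ : Set (Fin p → ℝ)) ⊆
      ⋃ σ ∈ (Finset.univ : Finset (Equiv.Perm (Fin p))), B σ := by
    intro y _
    simp only [Set.mem_iUnion]
    exact ⟨Tuple.sort y, Finset.mem_univ _, fun i j hij => Tuple.monotone_sort y hij⟩
  have h1 : (1 : ℝ≥0∞) ≤ (p.factorial : ℝ≥0∞)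
      * (Measure.pi fun i => gaussianReal (μ i) 1) A := by
    calc (1 : ℝ≥0∞) = (Measure.pi fun i => gaussianReal (μ i) 1) Set.univ :=
          (measure_univ).symm
      _ ≤ (Measure.pi fun i => gaussianReal (μ i) 1)
          (⋃ σ ∈ (Finset.univ : Finset (Equiv.Perm (Fin p))), B σ) := measure_mono hcover
      _ ≤ ∑ σ : Equiv.Perm (Fin p), (Measure.pi fun i => gaussianReal (μ i) 1) (B σ) :=
          measure_biUnion_finset_le _ _
      _ ≤ ∑ σ : Equiv.Perm (Fin p), (Measure.pi fun i => gaussianReal (μ i) 1) A := by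
          refine Finset.sum_le_sum fun σ _ => ?_
          rw [hB σ]; exact hcomp σ
      _ = (p.factorial : ℝ≥0∞) * (Measure.pi fun i => gaussianReal (μ i) 1) A := by
          rw [Finset.sum_const, Finset.card_univ, Fintype.card_perm, Fintype.card_fin, nsmul_eq_mul]
  have hfac0 : (p.factorial : ℝ≥0∞) ≠ 0 := Nat.cast_ne_zero.2 p.factorial_ne_zero
  have hfact : (p.factorial : ℝ≥0∞) ≠ ⊤ := ENNReal.natCast_ne_top _
  have hofReal : ENNReal.ofReal ((1:ℝ) / (Nat.factorial p)) = ((p.factorial : ℝ≥0∞))⁻¹ := by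
    rw [one_div, ENNReal.ofReal_inv_of_pos (by positivity), ENNReal.ofReal_natCast]
  rw [hofReal]
  calc ((p.factorial : ℝ≥0∞))⁻¹ = (p.factorial : ℝ≥0∞)⁻¹ * 1 := (mul_one _).symm
    _ ≤ (p.factorial : ℝ≥0∞)⁻¹
        * ((p.factorial : ℝ≥0∞) * (Measure.pi fun i => gaussianReal (μ i) 1) A) :=
        mul_le_mul_right h1 _
    _ = (Measure.pi fun i => gaussianReal (μ i) 1) A := by
        rw [← mul_assoc, ENNReal.inv_mul_cancel hfac0 hfact, one_mul]
end
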